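/- arXiv:2009.06906 — 6 statements merged into one kernel-verified Lean document; each statement's English description precedes it below -/
import Mathlib

section
/- Let (i_1,...,i_N) with N = n(n+1)/2 be a reduced word of the longest element w_0 of S_{n+1}. Then there exist unique indices 1 ≤ d_1 < d_2 < ⋯ < d_n ≤ N such that (i_{d_1}, i_{d_2}, ..., i_{d_n}) = (n, n-1, ..., 2, 1). -/
open Equiv List

/-- The simple transposition `s_{c+1}` (0-based: swaps `c` and `c+1` in `Fin (n+1)`). -/
def simpleT (n c : ℕ) : Equiv.Perm (Fin (n + 1)) :=
  if h : c + 1 ≤ n then Equiv.swap ⟨c, by omega⟩ ⟨c + 1, by omega⟩ else 1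

/-- `l` is a word for the permutation `w` in `S_{n+1}`, with 0-based letters in `[0, n)`. -/
def IsWord (n : ℕ) (w : Equiv.Perm (Fin (n + 1))) (l : List ℕ) : Prop :=
  (∀ c ∈ l, c < n) ∧ (l.map (simpleT n)).prod = w

/-- The Coxeter length of `w`: minimal length of a word for `w`. -/
noncomputable def coxLen (n : ℕ) (w : Equiv.Perm (Fin (n + 1))) : ℕ :=
  sInf {r | ∃ l : List ℕ, l.length = r ∧ IsWord n w l}

/-- `l` is a reduced word of `w`. -/
def IsReducedWord (n : ℕ) (w : Equiv.Perm (Fin (n + 1))) (l : List ℕ) : Prop :=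
  IsWord n w l ∧ l.length = coxLen n w

/-- The longest element of `S_{n+1}`, sending (0-based) `i` to `n - i`. -/
def w0 (n : ℕ) : Equiv.Perm (Fin (n + 1)) :=
  ⟨Fin.rev, Fin.rev, Fin.rev_rev, Fin.rev_rev⟩

/-- The word poset relation of the word `l`: transitive closure of
`j ≤ k` and `|l_j - l_k| ≤ 1`. -/
def wordRel (l : List ℕ) : Fin l.length → Fin l.length → Prop :=
  Relation.ReflTransGen (fun j k => j ≤ k ∧ l.get j ≤ l.get k + 1 ∧ l.get k ≤ l.get j + 1)

/-- A 2-move (commutation). -/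
def CommMove (l l' : List ℕ) : Prop :=
  ∃ (u v : List ℕ) (a b : ℕ), (a + 1 < b ∨ b + 1 < a) ∧
    l = u ++ a :: b :: v ∧ l' = u ++ b :: a :: v

/-- Equivalence of words by sequences of 2-moves. -/
def CommEquiv : List ℕ → List ℕ → Prop := Relation.ReflTransGen CommMove

namespace Chain

variable (n : ℕ)

/-- inversion set -/
def invSet (w : Perm (Fin (n+1))) : Finset (Fin (n+1) × Fin (n+1)) :=
  Finset.univ.filter (fun p => p.1 < p.2 ∧ w p.2 < w p.1)

def pairSet : Finset (Fin (n+1) × Fin (n+1)) :=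
  Finset.univ.filter (fun p => p.1 < p.2)

variable {n}

lemma simpleT_of_le {c : ℕ} (hc : c + 1 ≤ n) :
    simpleT n c = Equiv.swap (⟨c, by omega⟩ : Fin (n+1)) ⟨c + 1, by omega⟩ := by
  simp [simpleT, hc]

lemma simpleT_inv (c : ℕ) : (simpleT n c)⁻¹ = simpleT n c := by
  unfold simpleT; split <;> simp

lemma simpleT_invol (c : ℕ) (x : Fin (n+1)) : simpleT n c (simpleT n c x) = x := by
  unfold simpleT; split <;> simp

lemma swap_lt {c : ℕ} (hc : c + 1 ≤ n) {a b : Fin (n+1)} (hab : a < b)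
    (hne : ¬((a : ℕ) = c ∧ (b : ℕ) = c + 1)) :
    simpleT n c a < simpleT n c b := by
  rw [simpleT_of_le hc]
  rw [Fin.lt_iff_val_lt_val] at hab ⊢
  simp only [Equiv.swap_apply_def]
  split_ifs with h1 h2 h3 h4 <;>
    simp_all only [Fin.ext_iff, Fin.lt_iff_val_lt_val] <;> simp_all <;> omega

lemma invSet_card_mul {w : Perm (Fin (n+1))} {c : ℕ} (hc : c + 1 ≤ n)
    (hd : w ⟨c+1, by omega⟩ < w ⟨c, by omega⟩) :
    (invSet n (w * simpleT n c)).card + 1 = (invSet n w).card := by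
  classical
  set A : Fin (n+1) := ⟨c, by omega⟩
  set B : Fin (n+1) := ⟨c+1, by omega⟩
  have hsA : simpleT n c A = B := by rw [simpleT_of_le hc]; exact Equiv.swap_apply_left _ _
  have hsB : simpleT n c B = A := by rw [simpleT_of_le hc]; exact Equiv.swap_apply_right _ _
  have hAB : A < B := by simp [A, B, Fin.lt_iff_val_lt_val]
  have hq : (A, B) ∈ invSet n w := by simp [invSet, hAB, hd]
  have hq' : (A, B) ∉ invSet n (w * simpleT n c) := by
    rw [invSet, Finset.mem_filter]
    simp only [invSet, Finset.mem_filter, Perm.mul_apply, hsA, hsB]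
    intro h
    exact absurd h.2.2 (not_lt.2 (le_of_lt hd))
  have key : (invSet n (w * simpleT n c)).card = ((invSet n w).erase (A, B)).card := by
    apply Finset.card_bij' (fun p _ => (simpleT n c p.1, simpleT n c p.2))
      (fun p _ => (simpleT n c p.1, simpleT n c p.2))
    · intro p hp
      rw [invSet, Finset.mem_filter] at hp
      simp only [invSet, Finset.mem_filter, Perm.mul_apply, Finset.mem_univ, true_and] at hp
      have hpne : ¬(((p.1 : ℕ) = c) ∧ ((p.2 : ℕ) = c + 1)) := by
        intro hh
        apply hq'
        have : p = (A, B) := by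
          cases p; simp_all [Prod.ext_iff, Fin.ext_iff, A, B]
        rw [← this]
        rw [invSet, Finset.mem_filter]; exact ⟨Finset.mem_univ _, hp.1, hp.2⟩
      refine Finset.mem_erase.2 ⟨?_, ?_⟩
      · intro hEq
        -- (s p.1, s p.2) = (A,B) → p = (B, A), contradicting p.1 < p.2
        have h1 : simpleT n c p.1 = A := congrArg Prod.fst hEq
        have h2 : simpleT n c p.2 = B := congrArg Prod.snd hEq
        have : p.1 = B := by
          have := congrArg (simpleT n c) h1; rwa [simpleT_invol, hsA] at this
        have hp2 : p.2 = A := by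
          have := congrArg (simpleT n c) h2; rwa [simpleT_invol, hsB] at this
        rw [this, hp2] at hp
        exact absurd hp.1 (not_lt.2 (le_of_lt hAB))
      · simp only [invSet, Finset.mem_filter, Finset.mem_univ, true_and]
        exact ⟨swap_lt hc hp.1 hpne, hp.2⟩
    · intro p hp
      have hp' := Finset.mem_of_mem_erase hp
      have hpne0 := Finset.ne_of_mem_erase hp
      simp only [invSet, Finset.mem_filter, Finset.mem_univ, true_and] at hp'
      have hpne : ¬(((p.1 : ℕ) = c) ∧ ((p.2 : ℕ) = c + 1)) := by
        intro hh
        apply hpne0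
        cases p; simp_all [Prod.ext_iff, Fin.ext_iff, A, B]
      rw [invSet, Finset.mem_filter]
      simp only [invSet, Finset.mem_filter, Finset.mem_univ, true_and, Perm.mul_apply,
        simpleT_invol]
      exact ⟨swap_lt hc hp'.1 hpne, hp'.2⟩
    · intro p _; ext <;> simp [simpleT_invol]
    · intro p _; ext <;> simp [simpleT_invol]
  rw [key, Finset.card_erase_of_mem hq]
  have : 0 < (invSet n w).card := Finset.card_pos.2 ⟨_, hq⟩
  omega

lemma perm_eq_one_of_strictMono {m : ℕ} {w : Perm (Fin m)} (h : StrictMono w) : w = 1 := by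
  have hiso : (⟨w, fun {a b} => h.le_iff_le⟩ : Fin m ≃o Fin m) = OrderIso.refl _ :=
    Subsingleton.elim _ _
  ext x
  have := congrArg (fun f : Fin m ≃o Fin m => f x) hiso
  exact congrArg Fin.val (by simpa using this)

/-- If `w` has no descent then it is the identity. -/
lemma eq_one_of_no_descent {w : Perm (Fin (n+1))}
    (h : ∀ c : ℕ, (hc : c + 1 ≤ n) → w ⟨c, by omega⟩ < w ⟨c+1, by omega⟩) : w = 1 := by
  apply perm_eq_one_of_strictMono
  rw [Fin.strictMono_iff_lt_succ]
  intro i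
  have e1 : Fin.castSucc i = (⟨(i : ℕ), by omega⟩ : Fin (n+1)) := rfl
  have e2 : i.succ = (⟨(i : ℕ) + 1, by omega⟩ : Fin (n+1)) := rfl
  rw [e1, e2]
  exact h (i : ℕ) i.isLt

lemma exists_word_card (w : Perm (Fin (n+1))) :
    ∃ l : List ℕ, IsWord n w l ∧ l.length = (invSet n w).card := by
  generalize hk : (invSet n w).card = k
  induction k using Nat.strong_induction_on generalizing w with
  | _ k ih =>
    by_cases hdes : ∃ c : ℕ, ∃ hc : c + 1 ≤ n, w ⟨c+1, by omega⟩ < w ⟨c, by omega⟩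
    · obtain ⟨c, hc, hd⟩ := hdes
      have hcard := invSet_card_mul hc hd
      rw [hk] at hcard
      have hk' : (invSet n (w * simpleT n c)).card = k - 1 := by omega
      obtain ⟨l, hl, hlen⟩ := ih (k-1) (by omega) _ hk'
      refine ⟨l ++ [c], ⟨?_, ?_⟩, ?_⟩
      · intro x hx
        rcases List.mem_append.1 hx with hx | hx
        · exact hl.1 x hx
        · simp at hx; omega
      · rw [List.map_append, List.prod_append, hl.2]
        simp only [List.map_cons, List.map_nil, List.prod_cons, List.prod_nil, mul_one]
        rw [mul_assoc]
        have hss : simpleT n c * simpleT n c = 1 := by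
          ext x
          simp [Perm.mul_apply, simpleT_invol]
        rw [hss, mul_one]
      · simp [hlen]; omega
    · push_neg at hdes
      have hw1 : w = 1 := by
        apply eq_one_of_no_descent
        intro c hc
        rcases lt_trichotomy (w ⟨c, by omega⟩) (w ⟨c+1, by omega⟩) with h | h | h
        · exact h
        · exfalso
          have : (⟨c, by omega⟩ : Fin (n+1)) = ⟨c+1, by omega⟩ := w.injective h
          simp [Fin.ext_iff] at this
        · exact absurd h (not_lt.2 (hdes c hc))
      subst hw1
      have : invSet n 1 = ∅ := by
        ext p; rw [invSet, Finset.mem_filter]; simp only [invSet, Finset.mem_filter, Finset.mem_univ, true_and,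
          Perm.one_apply, Finset.notMem_empty, iff_false]
        rintro ⟨h1, h2⟩; exact absurd h1 (not_lt.2 (le_of_lt h2))
      rw [this] at hk
      simp at hk
      exact ⟨[], ⟨by simp, by simp⟩, by simp [← hk]⟩

lemma coxLen_le_card (w : Perm (Fin (n+1))) : coxLen n w ≤ (invSet n w).card := by
  obtain ⟨l, hl, hlen⟩ := exists_word_card (n := n) w
  exact Nat.sInf_le ⟨l, hlen, hl⟩

lemma invSet_w0 : invSet n (w0 n) = pairSet n := by
  ext p
  simp only [invSet, pairSet, Finset.mem_filter, Finset.mem_univ, true_and, and_iff_left_iff_imp]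
  intro hp
  change Fin.rev p.2 < Fin.rev p.1
  exact Fin.rev_lt_rev.2 hp

section Wires

variable {n : ℕ} {l : List ℕ}

/-- prefix product -/
def pre (n : ℕ) (l : List ℕ) (t : ℕ) : Perm (Fin (n+1)) := ((l.take t).map (simpleT n)).prod

/-- position of the top wire at time t -/
def P (n : ℕ) (l : List ℕ) (t : ℕ) : Fin (n+1) := (pre n l t)⁻¹ (Fin.last n)

lemma pre_zero : pre n l 0 = 1 := by simp [pre]

lemma pre_succ {t : ℕ} (ht : t < l.length) :
    pre n l (t+1) = pre n l t * simpleT n (l.get ⟨t, ht⟩) := by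
  have h1 : ∀ s, pre n l s = ((l.map (simpleT n)).take s).prod := by
    intro s; unfold pre; rw [List.map_take]
  rw [h1, h1, List.prod_take_succ _ t (by simpa using ht)]
  congr 1
  simp

lemma P_zero : P n l 0 = Fin.last n := by simp [P, pre_zero]

lemma P_succ {t : ℕ} (ht : t < l.length) :
    P n l (t+1) = simpleT n (l.get ⟨t, ht⟩) (P n l t) := by
  unfold P
  rw [pre_succ ht, mul_inv_rev, simpleT_inv, Perm.mul_apply]

lemma pre_len (hw : IsWord n (w0 n) l) : pre n l l.length = w0 n := by
  unfold pre; rw [List.take_length]; exact hw.2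

lemma P_len (hw : IsWord n (w0 n) l) : P n l l.length = 0 := by
  unfold P
  rw [pre_len hw]
  have h1 : (w0 n)⁻¹ = w0 n := rfl
  rw [h1]
  show Fin.rev (Fin.last n) = 0
  simp

lemma letter_lt (hw : IsWord n (w0 n) l) (t : Fin l.length) : l.get t + 1 ≤ n :=
  hw.1 _ (List.get_mem l t)

lemma step_val (hw : IsWord n (w0 n) l) {t : ℕ} (ht : t < l.length) :
    (P n l (t+1) = P n l t ∧ (P n l t : ℕ) ≠ l.get ⟨t, ht⟩ ∧ (P n l t : ℕ) ≠ l.get ⟨t, ht⟩ + 1)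
    ∨ ((P n l t : ℕ) = l.get ⟨t, ht⟩ ∧ (P n l (t+1) : ℕ) = l.get ⟨t, ht⟩ + 1)
    ∨ ((P n l t : ℕ) = l.get ⟨t, ht⟩ + 1 ∧ (P n l (t+1) : ℕ) = l.get ⟨t, ht⟩) := by
  set c := l.get ⟨t, ht⟩ with hcdef
  have hcn : c + 1 ≤ n := letter_lt hw ⟨t, ht⟩
  rw [P_succ ht, ← hcdef, simpleT_of_le hcn]
  by_cases h1 : P n l t = (⟨c, by omega⟩ : Fin (n+1))
  · right; left
    rw [h1, Equiv.swap_apply_left]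
    exact ⟨rfl, rfl⟩
  · by_cases h2 : P n l t = (⟨c+1, by omega⟩ : Fin (n+1))
    · right; right
      rw [h2, Equiv.swap_apply_right]
      exact ⟨rfl, rfl⟩
    · left
      rw [Equiv.swap_apply_of_ne_of_ne h1 h2]
      refine ⟨rfl, ?_, ?_⟩
      · intro hEq; exact h1 (Fin.ext hEq)
      · intro hEq; exact h2 (Fin.ext hEq)

/-- the set of times at which the top wire moves -/
def moves (n : ℕ) (l : List ℕ) : Finset ℕ :=
  (Finset.range l.length).filter (fun t => P n l (t+1) ≠ P n l t)

lemma mem_moves {t : ℕ} : t ∈ moves n l ↔ t < l.length ∧ P n l (t+1) ≠ P n l t := by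
  simp [moves]

lemma mem_moves_of_letter (hw : IsWord n (w0 n) l) {t : ℕ} (ht : t < l.length)
    (h : (P n l t : ℕ) = l.get ⟨t, ht⟩ ∨ (P n l t : ℕ) = l.get ⟨t, ht⟩ + 1) :
    t ∈ moves n l := by
  rw [mem_moves]
  refine ⟨ht, ?_⟩
  rcases step_val hw ht with ⟨_, h1, h2⟩ | ⟨h1, h2⟩ | ⟨h1, h2⟩
  · rcases h with h | h
    · exact absurd h h1
    · exact absurd h h2
  · intro hEq; rw [hEq] at h2; omega
  · intro hEq; rw [hEq] at h2; omega

/-- the left strand of the crossing at step t -/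
def pA (hw : IsWord n (w0 n) l) (t : Fin l.length) : Fin (n+1) :=
  ⟨l.get t, by have := letter_lt hw t; omega⟩

/-- the right strand of the crossing at step t -/
def pB (hw : IsWord n (w0 n) l) (t : Fin l.length) : Fin (n+1) :=
  ⟨l.get t + 1, by have := letter_lt hw t; omega⟩

lemma crossing_ne (hw : IsWord n (w0 n) l) (t : Fin l.length) :
    pre n l t (pA hw t) ≠ pre n l t (pB hw t) := by
  intro hEq
  have := (pre n l t).injective hEq
  simp [pA, pB, Fin.ext_iff] at this

/-- the pair of wires crossing at step t -/
def crossing (hw : IsWord n (w0 n) l) (t : Fin l.length) :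
    {p : Fin (n+1) × Fin (n+1) // p.1 < p.2} :=
  if hxy : pre n l t (pA hw t) < pre n l t (pB hw t) then
    ⟨(pre n l t (pA hw t), pre n l t (pB hw t)), hxy⟩
  else
    ⟨(pre n l t (pB hw t), pre n l t (pA hw t)),
      lt_of_le_of_ne (not_lt.1 hxy) (Ne.symm (crossing_ne hw t))⟩

lemma exists_flip {L : ℕ} {Q : ℕ → Prop} (h0 : Q 0) (hL : ¬ Q L) :
    ∃ t, t < L ∧ Q t ∧ ¬ Q (t+1) := by
  by_contra hcon
  push_neg at hcon
  have key : ∀ t, t ≤ L → Q t := by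
    intro t
    induction t with
    | zero => intro _; exact h0
    | succ t ih => intro hlt; exact hcon t (by omega) (ih (by omega))
  exact hL (key L le_rfl)

lemma crossing_surj (hw : IsWord n (w0 n) l) :
    Function.Surjective (crossing hw) := by
  rintro ⟨⟨u, v⟩, huv⟩
  have h0 : (pre n l 0)⁻¹ u < (pre n l 0)⁻¹ v := by rw [pre_zero]; simpa using huv
  have hL : ¬ ((pre n l l.length)⁻¹ u < (pre n l l.length)⁻¹ v) := by
    rw [pre_len hw]
    have h1 : (w0 n)⁻¹ = w0 n := rfl
    rw [h1]
    show ¬ (Fin.rev u < Fin.rev v)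
    rw [Fin.rev_lt_rev]
    exact not_lt.2 (le_of_lt huv)
  obtain ⟨t, ht, hQ, hQ'⟩ :=
    exists_flip (Q := fun t => (pre n l t)⁻¹ u < (pre n l t)⁻¹ v) h0 hL
  set c := l.get ⟨t, ht⟩ with hcdef
  have hcn : c + 1 ≤ n := letter_lt hw ⟨t, ht⟩
  set a := (pre n l t)⁻¹ u with hadef
  set b := (pre n l t)⁻¹ v with hbdef
  rw [pre_succ ht, mul_inv_rev, simpleT_inv, Perm.mul_apply, Perm.mul_apply] at hQ'
  have hkey : (a : ℕ) = c ∧ (b : ℕ) = c + 1 := by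
    by_contra hcon
    exact hQ' (swap_lt hcn hQ hcon)
  refine ⟨⟨t, ht⟩, ?_⟩
  have hA : pA hw ⟨t, ht⟩ = a := Fin.ext hkey.1.symm
  have hB : pB hw ⟨t, ht⟩ = b := Fin.ext hkey.2.symm
  have hxu : pre n l t a = u := by rw [hadef]; simp
  have hxv : pre n l t b = v := by rw [hbdef]; simp
  unfold crossing
  simp only [hA, hB, hxu, hxv]
  rw [dif_pos huv]

end Wires

section Counting

variable {n : ℕ} {l : List ℕ}

lemma length_le_card_pairs (hred : IsReducedWord n (w0 n) l) :
    l.length ≤ Fintype.card {p : Fin (n+1) × Fin (n+1) // p.1 < p.2} := by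
  rw [Fintype.card_subtype]
  calc l.length = coxLen n (w0 n) := hred.2
    _ ≤ (invSet n (w0 n)).card := coxLen_le_card _
    _ = (pairSet n).card := by rw [invSet_w0]
    _ ≤ _ := by
        apply Finset.card_le_card
        intro p hp
        simp only [pairSet, Finset.mem_filter] at hp ⊢
        exact ⟨hp.1, hp.2⟩

lemma crossing_inj (hred : IsReducedWord n (w0 n) l) :
    Function.Injective (crossing hred.1) := by
  have hsurj := crossing_surj hred.1
  have hcard : Fintype.card (Fin l.length)
      = Fintype.card {p : Fin (n+1) × Fin (n+1) // p.1 < p.2} := by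
    have h1 := Fintype.card_le_of_surjective _ hsurj
    have h2 := length_le_card_pairs hred
    rw [Fintype.card_fin] at *
    omega
  exact ((Fintype.bijective_iff_surjective_and_card _).2 ⟨hsurj, hcard⟩).1

lemma crossing_snd_of_move (hw : IsWord n (w0 n) l) {t : ℕ} (ht : t < l.length)
    (hm : t ∈ moves n l) : (crossing hw ⟨t, ht⟩).1.2 = Fin.last n := by
  have hPt : pre n l t (P n l t) = Fin.last n := by
    unfold P; simp
  have hmem : P n l t = pA hw ⟨t, ht⟩ ∨ P n l t = pB hw ⟨t, ht⟩ := by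
    rcases step_val hw ht with ⟨hEq, _, _⟩ | ⟨h1, _⟩ | ⟨h1, _⟩
    · exact absurd hEq (mem_moves.1 hm).2
    · left; exact Fin.ext h1
    · right; exact Fin.ext h1
  unfold crossing
  rcases hmem with hPA | hPB
  · have hxl : pre n l t (pA hw ⟨t, ht⟩) = Fin.last n := by rw [← hPA]; exact hPt
    rw [dif_neg (by rw [hxl]; exact not_lt.2 (Fin.le_last _))]
    exact hxl
  · have hyl : pre n l t (pB hw ⟨t, ht⟩) = Fin.last n := by rw [← hPB]; exact hPt
    have hlt : pre n l t (pA hw ⟨t, ht⟩) < pre n l t (pB hw ⟨t, ht⟩) := by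
      rw [hyl]
      exact lt_of_le_of_ne (Fin.le_last _) (fun hEq => crossing_ne hw ⟨t, ht⟩ (by rw [hEq, hyl]))
    rw [dif_pos hlt]
    exact hyl

lemma card_moves_le (hred : IsReducedWord n (w0 n) l) : (moves n l).card ≤ n := by
  classical
  have hinj := crossing_inj hred
  set f : ℕ → Fin (n+1) × Fin (n+1) := fun t =>
    if ht : t < l.length then (crossing hred.1 ⟨t, ht⟩).1 else (0, 0) with hfdef
  have hmaps : ∀ t ∈ moves n l, f t ∈ Finset.univ.filter
      (fun p : Fin (n+1) × Fin (n+1) => p.2 = Fin.last n ∧ p.1 ≠ Fin.last n) := by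
    intro t htm
    have ht : t < l.length := (mem_moves.1 htm).1
    simp only [hfdef, dif_pos ht, Finset.mem_filter, Finset.mem_univ, true_and]
    have h2 := crossing_snd_of_move hred.1 ht htm
    refine ⟨h2, ?_⟩
    intro h1
    have hlt := (crossing hred.1 ⟨t, ht⟩).2
    rw [h1, h2] at hlt
    exact lt_irrefl _ hlt
  have hinjOn : Set.InjOn f (moves n l) := by
    intro t1 h1 t2 h2 hEq
    have ht1 : t1 < l.length := (mem_moves.1 (by simpa using h1)).1
    have ht2 : t2 < l.length := (mem_moves.1 (by simpa using h2)).1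
    simp only [hfdef, dif_pos ht1, dif_pos ht2] at hEq
    exact congrArg Fin.val (hinj (Subtype.ext hEq))
  have hle := Finset.card_le_card_of_injOn f hmaps hinjOn
  apply hle.trans
  have h2 : (Finset.univ.filter
      (fun p : Fin (n+1) × Fin (n+1) => p.2 = Fin.last n ∧ p.1 ≠ Fin.last n)).card
      ≤ (Finset.univ.filter (fun x : Fin (n+1) => x ≠ Fin.last n)).card := by
    apply Finset.card_le_card_of_injOn Prod.fst
    · intro p hp
      simp only [Finset.mem_coe, Finset.mem_filter, Finset.mem_univ, true_and] at hp ⊢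
      exact hp.2
    · intro p hp q hq hEq
      simp only [Finset.coe_filter, Set.mem_setOf_eq, Finset.mem_univ, true_and] at hp hq
      exact Prod.ext hEq (hp.1.trans hq.1.symm)
  apply h2.trans
  rw [Finset.filter_ne', Finset.card_erase_of_mem (Finset.mem_univ _)]
  simp

lemma moves_down (hred : IsReducedWord n (w0 n) l) {t : ℕ} (ht : t < l.length)
    (hm : t ∈ moves n l) :
    (P n l t : ℕ) = l.get ⟨t, ht⟩ + 1 ∧ (P n l (t+1) : ℕ) = l.get ⟨t, ht⟩ := by
  classical
  rcases step_val hred.1 ht with ⟨hEq, _, _⟩ | ⟨h1, h2⟩ | ⟨h1, h2⟩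
  · exact absurd hEq (mem_moves.1 hm).2
  · -- up-move: contradiction via telescoping sum
    exfalso
    set F : ℕ → ℤ := fun s => ((P n l s : ℕ) : ℤ) with hFdef
    have hsum : ∑ s ∈ Finset.range l.length, (F s - F (s+1)) = (n : ℤ) := by
      rw [Finset.sum_range_sub' F]
      simp [hFdef, P_zero, P_len hred.1]
    have hsum2 : ∑ s ∈ moves n l, (F s - F (s+1)) = (n : ℤ) := by
      rw [← hsum]
      apply Finset.sum_filter_of_ne
      intro x hx hne hPP
      exact hne (by simp [hFdef, hPP])
    have hbound : ∀ s ∈ (moves n l).erase t, F s - F (s+1) ≤ 1 := by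
      intro s hs
      have hs' := Finset.mem_of_mem_erase hs
      have hsl : s < l.length := (mem_moves.1 hs').1
      rcases step_val hred.1 hsl with ⟨hEq, _, _⟩ | ⟨g1, g2⟩ | ⟨g1, g2⟩
      · simp [hFdef, hEq]
      · simp only [hFdef]; omega
      · simp only [hFdef]; omega
    have hterm : F t - F (t+1) = -1 := by simp only [hFdef]; omega
    have hrest := Finset.sum_le_card_nsmul ((moves n l).erase t) (fun s => F s - F (s+1)) 1 hbound
    rw [Finset.card_erase_of_mem hm] at hrest
    have hsplit : F t - F (t+1) + ∑ x ∈ (moves n l).erase t, (F x - F (x+1))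
        = ∑ x ∈ moves n l, (F x - F (x+1)) :=
      Finset.add_sum_erase (moves n l) (fun s => F s - F (s+1)) hm
    have hcard := card_moves_le hred
    have hcard1 : 1 ≤ (moves n l).card := Finset.card_pos.2 ⟨t, hm⟩
    rw [← hsplit, hterm] at hsum2
    have : ((moves n l).card - 1) • (1 : ℤ) = (((moves n l).card : ℤ) - 1) := by
      rw [nsmul_eq_mul, mul_one]
      push_cast [hcard1]
      omega
    rw [this] at hrest
    omega
  · exact ⟨h1, h2⟩

lemma P_val (hred : IsReducedWord n (w0 n) l) :
    ∀ t, t ≤ l.length → (P n l t : ℕ) + ((moves n l).filter (· < t)).card = n := by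
  intro t
  induction t with
  | zero =>
    intro _
    have hfil : (moves n l).filter (· < 0) = ∅ := by
      apply Finset.filter_false_of_mem
      intro x _
      omega
    simp [P_zero, hfil]
  | succ t ih =>
    intro hle
    have ht : t < l.length := by omega
    have hprev := ih (by omega)
    by_cases hm : t ∈ moves n l
    · have hstep : (moves n l).filter (· < t+1) = insert t ((moves n l).filter (· < t)) := by
        ext x
        simp only [Finset.mem_filter, Finset.mem_insert]
        constructor
        · rintro ⟨hx, hlt⟩
          rcases Nat.lt_or_ge x t with hlt' | hge
          · exact Or.inr ⟨hx, hlt'⟩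
          · exact Or.inl (by omega)
        · rintro (rfl | ⟨hx, hlt⟩)
          · exact ⟨hm, by omega⟩
          · exact ⟨hx, by omega⟩
      have hd := moves_down hred ht hm
      rw [hstep, Finset.card_insert_of_notMem (by simp [Finset.mem_filter])]
      omega
    · have hPP : P n l (t+1) = P n l t := by
        by_contra hne
        exact hm (mem_moves.2 ⟨ht, hne⟩)
      have hstep : (moves n l).filter (· < t+1) = (moves n l).filter (· < t) := by
        ext x
        simp only [Finset.mem_filter]
        constructor
        · rintro ⟨hx, hlt⟩
          refine ⟨hx, ?_⟩
          rcases Nat.lt_or_ge x t with hlt' | hge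
          · exact hlt'
          · exfalso; have : x = t := by omega
            rw [this] at hx; exact hm hx
        · rintro ⟨hx, hlt⟩
          exact ⟨hx, by omega⟩
      rw [hstep, hPP]
      exact hprev

lemma card_moves (hred : IsReducedWord n (w0 n) l) : (moves n l).card = n := by
  have h1 := P_val hred l.length le_rfl
  have hfil : (moves n l).filter (· < l.length) = moves n l :=
    Finset.filter_true_of_mem (by intro x hx; exact (mem_moves.1 hx).1)
  rw [P_len hred.1, hfil] at h1
  simpa using h1

end Counting

section Enum

variable {n : ℕ} {l : List ℕ}

lemma card_filter_lt_of_orderIso {s : Finset ℕ} {k : ℕ} (e : Fin k ≃o {x // x ∈ s}) (t : ℕ) :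
    (s.filter (· < t)).card = (Finset.univ.filter (fun i : Fin k => (e i : ℕ) < t)).card := by
  classical
  refine Finset.card_bij' (fun a ha => e.symm ⟨a, (Finset.mem_filter.1 ha).1⟩)
      (fun i _ => (e i : ℕ)) ?_ ?_ ?_ ?_
  · intro a ha
    simp only [Finset.mem_filter, Finset.mem_univ, true_and, OrderIso.apply_symm_apply]
    exact (Finset.mem_filter.1 ha).2
  · intro i hi
    refine Finset.mem_filter.2 ⟨(e i).2, ?_⟩
    exact (Finset.mem_filter.1 hi).2
  · intro a ha
    simp
  · intro i hi
    simp

lemma card_lt_val {m k : ℕ} (hk : k ≤ m) :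
    (Finset.univ.filter fun i : Fin m => (i : ℕ) < k).card = k := by
  induction k with
  | zero => simp
  | succ k ih =>
    have hstep : (Finset.univ.filter fun i : Fin m => (i : ℕ) < k + 1)
        = insert (⟨k, by omega⟩ : Fin m) (Finset.univ.filter fun i : Fin m => (i : ℕ) < k) := by
      ext i
      simp only [Finset.mem_filter, Finset.mem_univ, true_and, Finset.mem_insert, Fin.ext_iff]
      omega
    rw [hstep, Finset.card_insert_of_notMem (by simp), ih (by omega)]

/-- the `j`-th time at which the top wire moves -/
noncomputable def mfun (hred : IsReducedWord n (w0 n) l) (j : Fin n) : ℕ :=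
  ((moves n l).orderIsoOfFin (card_moves hred) j : ℕ)

lemma m_mem (hred : IsReducedWord n (w0 n) l) (j : Fin n) : mfun hred j ∈ moves n l :=
  ((moves n l).orderIsoOfFin (card_moves hred) j).2

lemma m_lt_len (hred : IsReducedWord n (w0 n) l) (j : Fin n) : mfun hred j < l.length :=
  (mem_moves.1 (m_mem hred j)).1

lemma m_lt_iff (hred : IsReducedWord n (w0 n) l) {i j : Fin n} :
    mfun hred i < mfun hred j ↔ i < j := by
  unfold mfun
  exact Iff.trans (by exact Subtype.coe_lt_coe) (OrderIso.lt_iff_lt _)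

lemma m_le_of_le (hred : IsReducedWord n (w0 n) l) {i j : Fin n} (h : i ≤ j) :
    mfun hred i ≤ mfun hred j := by
  rcases eq_or_lt_of_le h with rfl | h
  · exact le_rfl
  · exact le_of_lt ((m_lt_iff hred).2 h)

lemma m_exists (hred : IsReducedWord n (w0 n) l) {t : ℕ} (ht : t ∈ moves n l) :
    ∃ j : Fin n, mfun hred j = t := by
  refine ⟨((moves n l).orderIsoOfFin (card_moves hred)).symm ⟨t, ht⟩, ?_⟩
  unfold mfun
  rw [OrderIso.apply_symm_apply]

lemma P_of_count (hred : IsReducedWord n (w0 n) l) {t : ℕ} (ht : t ≤ l.length) {k : ℕ}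
    (hk : k ≤ n) (hiff : ∀ i : Fin n, mfun hred i < t ↔ (i : ℕ) < k) :
    (P n l t : ℕ) = n - k := by
  have h1 := P_val hred t ht
  rw [card_filter_lt_of_orderIso ((moves n l).orderIsoOfFin (card_moves hred)) t] at h1
  have h2 : (Finset.univ.filter fun i : Fin n =>
        (((moves n l).orderIsoOfFin (card_moves hred)) i : ℕ) < t)
      = Finset.univ.filter fun i : Fin n => (i : ℕ) < k := by
    apply Finset.filter_congr
    intro i _
    simpa [mfun] using hiff i
  rw [h2, card_lt_val hk] at h1
  omega

lemma count_at_m (hred : IsReducedWord n (w0 n) l) (j : Fin n) :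
    (P n l (mfun hred j) : ℕ) = n - (j : ℕ) := by
  apply P_of_count hred (le_of_lt (m_lt_len hred j)) (le_of_lt j.isLt)
  intro i
  rw [m_lt_iff hred, Fin.lt_iff_val_lt_val]

lemma letter_at_m (hred : IsReducedWord n (w0 n) l) (j : Fin n) :
    l.get ⟨mfun hred j, m_lt_len hred j⟩ = n - 1 - (j : ℕ) := by
  have hd := moves_down hred (m_lt_len hred j) (m_mem hred j)
  have hc := count_at_m hred j
  have hj := j.isLt
  omega

end Enum
end Chain

open Chain in
theorem exists_unique_descending_chain' (n : ℕ) (l : List ℕ)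
    (h : IsReducedWord n (w0 n) l) :
    ∃! d : Fin n → Fin l.length,
      StrictMono d ∧ ∀ j : Fin n, l.get (d j) = n - 1 - (j : ℕ) := by
  refine ⟨fun j => ⟨mfun h j, m_lt_len h j⟩, ⟨?_, ?_⟩, ?_⟩
  · intro a b hab
    rw [Fin.lt_iff_val_lt_val]
    exact (m_lt_iff h).2 hab
  · intro j
    exact letter_at_m h j
  · intro d' ⟨hd'm, hd'g⟩
    have up : ∀ k, (hk : k < n) → mfun h ⟨k, hk⟩ ≤ ((d' ⟨k, hk⟩ : Fin l.length) : ℕ) := by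
      intro k
      induction k with
      | zero =>
        intro hk
        by_contra hcon
        push_neg at hcon
        set t : ℕ := ((d' ⟨0, hk⟩ : Fin l.length) : ℕ) with htdef
        have ht : t < l.length := (d' ⟨0, hk⟩).isLt
        have hiff : ∀ i : Fin n, mfun h i < t ↔ (i : ℕ) < 0 := by
          intro i
          constructor
          · intro hlt
            exfalso
            have h1 : mfun h ⟨0, hk⟩ ≤ mfun h i := m_le_of_le h (by simp [Fin.le_def])
            omega
          · omega
        have hP := P_of_count h (le_of_lt ht) (Nat.zero_le n) hiff
        have hlet : l.get ⟨t, ht⟩ = n - 1 - ((0 : ℕ)) := hd'g ⟨0, hk⟩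
        have hmove : t ∈ moves n l := by
          apply mem_moves_of_letter h.1 ht
          right
          omega
        obtain ⟨j', hj'⟩ := m_exists h hmove
        have : mfun h ⟨0, hk⟩ ≤ mfun h j' := m_le_of_le h (by simp [Fin.le_def])
        omega
      | succ k ih =>
        intro hk
        by_contra hcon
        push_neg at hcon
        set t : ℕ := ((d' ⟨k+1, hk⟩ : Fin l.length) : ℕ) with htdef
        have ht : t < l.length := (d' ⟨k+1, hk⟩).isLt
        have hkn : k < n := by omega
        have hik := ih hkn
        have hdlt : ((d' ⟨k, hkn⟩ : Fin l.length) : ℕ) < t := by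
          have := hd'm (show (⟨k, hkn⟩ : Fin n) < ⟨k+1, hk⟩ from Fin.mk_lt_mk.mpr (by omega))
          rwa [Fin.lt_iff_val_lt_val] at this
        have hmk : mfun h ⟨k, hkn⟩ < t := by omega
        have hiff : ∀ i : Fin n, mfun h i < t ↔ (i : ℕ) < k + 1 := by
          intro i
          constructor
          · intro hlt
            have h1 : mfun h i < mfun h ⟨k+1, hk⟩ := by omega
            have := (m_lt_iff h).1 h1
            rw [Fin.lt_iff_val_lt_val] at this
            exact this
          · intro hlt
            have h1 : mfun h i ≤ mfun h ⟨k, hkn⟩ :=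
              m_le_of_le h (by rw [Fin.le_def]; simp; omega)
            omega
        have hP := P_of_count h (le_of_lt ht) (by omega) hiff
        have hlet : l.get ⟨t, ht⟩ = n - 1 - ((k+1 : ℕ)) := hd'g ⟨k+1, hk⟩
        have hmove : t ∈ moves n l := by
          apply mem_moves_of_letter h.1 ht
          right
          omega
        obtain ⟨j', hj'⟩ := m_exists h hmove
        have hlow : mfun h ⟨k, hkn⟩ < mfun h j' := by omega
        have hhigh : mfun h j' < mfun h ⟨k+1, hk⟩ := by omega
        have h1 := (m_lt_iff h).1 hlow
        have h2 := (m_lt_iff h).1 hhigh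
        rw [Fin.lt_iff_val_lt_val] at h1 h2
        simp at h1 h2
        omega
    have down : ∀ r, (hr : r < n) →
        ((d' ⟨n-1-r, by omega⟩ : Fin l.length) : ℕ) ≤ mfun h ⟨n-1-r, by omega⟩ := by
      intro r
      induction r with
      | zero =>
        intro hr
        by_contra hcon
        push_neg at hcon
        set t : ℕ := ((d' ⟨n-1-0, by omega⟩ : Fin l.length) : ℕ) with htdef
        have ht : t < l.length := (d' ⟨n-1-0, by omega⟩).isLt
        have hiff : ∀ i : Fin n, mfun h i < t ↔ (i : ℕ) < n := by
          intro i
          constructor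
          · intro _; exact i.isLt
          · intro _
            have h1 : mfun h i ≤ mfun h ⟨n-1-0, by omega⟩ :=
              m_le_of_le h (by rw [Fin.le_def]; simp; omega)
            omega
        have hP := P_of_count h (le_of_lt ht) le_rfl hiff
        have hlet : l.get ⟨t, ht⟩ = n - 1 - ((n-1-0 : ℕ)) := hd'g ⟨n-1-0, by omega⟩
        have hmove : t ∈ moves n l := by
          apply mem_moves_of_letter h.1 ht
          left
          omega
        obtain ⟨j', hj'⟩ := m_exists h hmove
        have hlow : mfun h ⟨n-1-0, by omega⟩ < mfun h j' := by omega
        have h1 := (m_lt_iff h).1 hlow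
        rw [Fin.lt_iff_val_lt_val] at h1
        simp at h1
        have := j'.isLt
        omega
      | succ r ih =>
        intro hr
        by_contra hcon
        push_neg at hcon
        have hrn : r < n := by omega
        have hir := ih hrn
        set t : ℕ := ((d' ⟨n-1-(r+1), by omega⟩ : Fin l.length) : ℕ) with htdef
        have ht : t < l.length := (d' ⟨n-1-(r+1), by omega⟩).isLt
        have hup := up (n-1-r) (by omega)
        have hdlt : t < ((d' ⟨n-1-r, by omega⟩ : Fin l.length) : ℕ) := by
          have := hd'm (show (⟨n-1-(r+1), by omega⟩ : Fin n) < ⟨n-1-r, by omega⟩ from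
            Fin.mk_lt_mk.mpr (by omega))
          rwa [Fin.lt_iff_val_lt_val] at this
        have htlt : t < mfun h ⟨n-1-r, by omega⟩ := by omega
        have hiff : ∀ i : Fin n, mfun h i < t ↔ (i : ℕ) < n-1-r := by
          intro i
          constructor
          · intro hlt
            have h1 : mfun h i < mfun h ⟨n-1-r, by omega⟩ := by omega
            have := (m_lt_iff h).1 h1
            rw [Fin.lt_iff_val_lt_val] at this
            simpa using this
          · intro hlt
            have h1 : mfun h i ≤ mfun h ⟨n-1-(r+1), by omega⟩ :=
              m_le_of_le h (by rw [Fin.le_def]; simp; omega)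
            omega
        have hP := P_of_count h (le_of_lt ht) (by omega) hiff
        have hlet : l.get ⟨t, ht⟩ = n - 1 - ((n-1-(r+1) : ℕ)) := hd'g ⟨n-1-(r+1), by omega⟩
        have hmove : t ∈ moves n l := by
          apply mem_moves_of_letter h.1 ht
          left
          omega
        obtain ⟨j', hj'⟩ := m_exists h hmove
        have hlow : mfun h ⟨n-1-(r+1), by omega⟩ < mfun h j' := by omega
        have hhigh : mfun h j' < mfun h ⟨n-1-r, by omega⟩ := by omega
        have h1 := (m_lt_iff h).1 hlow
        have h2 := (m_lt_iff h).1 hhigh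
        rw [Fin.lt_iff_val_lt_val] at h1 h2
        simp at h1 h2
        omega
    funext j
    apply Fin.ext
    have hup := up (j : ℕ) j.isLt
    have hjn : (j : ℕ) < n := j.isLt
    have hdn := down (n-1-(j : ℕ)) (by omega)
    have hidx : (⟨n-1-(n-1-(j : ℕ)), by omega⟩ : Fin n) = j := Fin.ext (by simp; omega)
    rw [hidx] at hdn
    have heta : (⟨(j : ℕ), j.isLt⟩ : Fin n) = j := Fin.ext rfl
    rw [heta] at hup
    show ((d' j : Fin l.length) : ℕ) = mfun h j
    omega

/-- In any reduced word of the longest element of $S_{n+1}$ there is a unique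
increasing sequence of positions carrying the letters `(n, n-1, ..., 1)`
(0-based: `(n-1, ..., 0)`). -/
theorem exists_unique_descending_chain (n : ℕ) (l : List ℕ)
    (h : IsReducedWord n (w0 n) l) :
    ∃! d : Fin n → Fin l.length,
      StrictMono d ∧ ∀ j : Fin n, l.get (d j) = n - 1 - (j : ℕ) := by
  exact exists_unique_descending_chain' n l h
end

section
/- Let (i_1,...,i_N) with N = n(n+1)/2 be a reduced word of the longest element w_0 of S_{n+1}. Then there exist unique indices 1 ≤ a_1 < a_2 < ⋯ < a_n ≤ N such that (i_{a_1}, i_{a_2}, ..., i_{a_n}) = (1, 2, ..., n). -/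
open Equiv List

section Inv
variable {n : ℕ}

lemma swap_adj_lt (c : ℕ) (hc : c + 1 ≤ n) (a b : Fin (n+1))
    (hab : ¬(a = ⟨c, by omega⟩ ∧ b = ⟨c+1, by omega⟩) ∧ ¬(a = ⟨c+1, by omega⟩ ∧ b = ⟨c, by omega⟩)) :
    Equiv.swap (⟨c, by omega⟩ : Fin (n+1)) ⟨c+1, by omega⟩ a < Equiv.swap ⟨c, by omega⟩ ⟨c+1, by omega⟩ b ↔ a < b := by
  obtain ⟨h1, h2⟩ := hab
  rcases a with ⟨a, ha⟩; rcases b with ⟨b, hb⟩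
  simp only [Equiv.swap_apply_def, Fin.ext_iff, Fin.lt_def] at *
  split_ifs <;> simp_all <;> omega

def invSet (n : ℕ) (w : Equiv.Perm (Fin (n+1))) : Finset (Fin (n+1) × Fin (n+1)) :=
  Finset.univ.filter fun p => p.1 < p.2 ∧ w p.2 < w p.1

noncomputable def invCount (n : ℕ) (w : Equiv.Perm (Fin (n+1))) : ℕ := (invSet n w).card

lemma invStep_up (w : Equiv.Perm (Fin (n+1))) (c : ℕ) (hc : c + 1 ≤ n)
    (hlt : w⁻¹ ⟨c, by omega⟩ < w⁻¹ ⟨c+1, by omega⟩) :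
    invCount n (simpleT n c * w) = invCount n w + 1 := by
  set c0 : Fin (n+1) := ⟨c, by omega⟩ with hc0
  set c1 : Fin (n+1) := ⟨c+1, by omega⟩ with hc1
  have hst : simpleT n c = Equiv.swap c0 c1 := by simp [simpleT, hc]; rfl
  set u := w⁻¹ c0 with hu
  set v := w⁻¹ c1 with hv
  have hwu : w u = c0 := by simp [hu]
  have hwv : w v = c1 := by simp [hv]
  have hc0lt : c0 < c1 := by simp [hc0, hc1, Fin.lt_def]
  have hkey : ∀ x y : Fin (n+1), (x,y) ≠ (u,v) → (x,y) ≠ (v,u) →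
      ((simpleT n c * w) y < (simpleT n c * w) x ↔ w y < w x) := by
    intro x y hxy hyx
    rw [hst]
    simp only [Equiv.Perm.mul_apply]
    apply swap_adj_lt c hc
    constructor
    · rintro ⟨h1, h2⟩
      exact hyx (by
        have hy : y = u := w.injective (by rw [hwu]; exact h1)
        have hx : x = v := w.injective (by rw [hwv]; exact h2)
        simp [hx, hy])
    · rintro ⟨h1, h2⟩
      exact hxy (by
        have hy : y = v := w.injective (by rw [hwv]; exact h1)
        have hx : x = u := w.injective (by rw [hwu]; exact h2)
        simp [hx, hy])
  have hset : invSet n (simpleT n c * w) = insert (u, v) (invSet n w) := by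
    ext ⟨x, y⟩
    simp only [invSet, Finset.mem_filter, Finset.mem_univ, true_and, Finset.mem_insert]
    by_cases hp : (x, y) = (u, v)
    · obtain ⟨hx, hy⟩ := Prod.mk.injEq .. ▸ hp
      subst hx; subst hy
      simp only [hp, true_or, iff_true]
      refine ⟨hlt, ?_⟩
      rw [hst]
      simp only [Equiv.Perm.mul_apply, hwu, hwv, Equiv.swap_apply_left, Equiv.swap_apply_right]
      exact hc0lt
    · by_cases hq : (x, y) = (v, u)
      · obtain ⟨hx, hy⟩ := Prod.mk.injEq .. ▸ hq
        subst hx; subst hy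
        have : ¬ (v < u) := by
          intro hxy; exact absurd (hxy.trans hlt) (lt_irrefl _)
        simp only [hp, false_or]
        constructor
        · rintro ⟨h1, -⟩; exact absurd h1 this
        · rintro ⟨h1, -⟩; exact absurd h1 this
      · rw [hkey x y hp hq]
        constructor
        · rintro ⟨h1, h2⟩; exact Or.inr ⟨h1, h2⟩
        · rintro (h | h)
          · exact absurd h hp
          · exact h
  have hnot : (u, v) ∉ invSet n w := by
    simp only [invSet, Finset.mem_filter, Finset.mem_univ, true_and, not_and]
    intro _
    rw [hwu, hwv]
    exact not_lt_of_gt hc0lt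
  rw [invCount, invCount, hset, Finset.card_insert_of_notMem hnot]

lemma invStep (w : Equiv.Perm (Fin (n+1))) (c : ℕ) (hc : c + 1 ≤ n) :
    (w⁻¹ ⟨c, by omega⟩ < w⁻¹ ⟨c+1, by omega⟩ ∧ invCount n (simpleT n c * w) = invCount n w + 1) ∨
    (w⁻¹ ⟨c+1, by omega⟩ < w⁻¹ ⟨c, by omega⟩ ∧ invCount n w = invCount n (simpleT n c * w) + 1) := by
  set c0 : Fin (n+1) := ⟨c, by omega⟩
  set c1 : Fin (n+1) := ⟨c+1, by omega⟩
  have hst : simpleT n c = Equiv.swap c0 c1 := by simp [simpleT, hc]; rfl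
  have hinv : simpleT n c * (simpleT n c * w) = w := by
    rw [← mul_assoc, hst, Equiv.swap_mul_self, one_mul]
  have huv : w⁻¹ c0 ≠ w⁻¹ c1 := by
    intro h
    have := w⁻¹.injective.eq_iff.mpr h  -- not quite; use apply
    have h2 : c0 = c1 := by
      have := congrArg w h; simpa using this
    exact absurd (congrArg Fin.val h2) (by show ¬ (c = c + 1); omega)
  rcases lt_or_gt_of_ne huv with hlt | hgt
  · exact Or.inl ⟨hlt, invStep_up w c hc hlt⟩
  · right
    refine ⟨hgt, ?_⟩
    have h1 : (simpleT n c * w)⁻¹ c0 < (simpleT n c * w)⁻¹ c1 := by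
      rw [mul_inv_rev]
      simp only [Equiv.Perm.mul_apply]
      have hs : (simpleT n c)⁻¹ = simpleT n c := by rw [hst, Equiv.swap_inv]
      rw [hs, hst]
      rw [Equiv.swap_apply_left, Equiv.swap_apply_right]
      exact hgt
    have := invStep_up (simpleT n c * w) c hc h1
    rw [hinv] at this
    exact this
end Inv

section Word
variable {n : ℕ}

lemma invCount_one : invCount n 1 = 0 := by
  simp only [invCount, invSet, Finset.card_eq_zero]
  ext ⟨x, y⟩
  simp only [Finset.mem_filter, Finset.mem_univ, true_and, Finset.notMem_empty, iff_false,
    Equiv.Perm.one_apply, not_and]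
  intro h1
  have h1' := Finset.mem_filter.mp h1
  exact absurd (h1'.2.1.trans h1'.2.2) (lt_irrefl _)

lemma invCount_w0 :
    invCount n (w0 n) = (Finset.univ.filter fun p : Fin (n+1) × Fin (n+1) => p.1 < p.2).card := by
  unfold invCount invSet
  congr 1
  ext ⟨x, y⟩
  simp only [Finset.mem_filter, Finset.mem_univ, true_and, and_iff_left_iff_imp]
  intro hxy
  show Fin.rev y < Fin.rev x
  exact Fin.rev_lt_rev.mpr hxy

lemma card_pairs_lt :
    (Finset.univ.filter fun p : Fin (n+1) × Fin (n+1) => p.1 < p.2).card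
      = ∑ i ∈ Finset.range (n+1), i := by
  rw [Finset.card_filter, Fintype.sum_prod_type]
  have h1 : ∀ x : Fin (n+1), (∑ y : Fin (n+1), if x < y then 1 else 0) = n - x.val := by
    intro x
    rw [← Finset.card_filter]
    have : Finset.univ.filter (fun y => x < y) = Finset.Ioi x := by
      ext y; simp [Finset.mem_Ioi]
    rw [this, Fin.card_Ioi]
    omega
  simp only [h1]
  rw [Fin.sum_univ_eq_sum_range]
  have := Finset.sum_range_reflect (fun i => i) (n+1)
  rw [← this]
  apply Finset.sum_congr rfl
  intro i hi
  simp only [Finset.mem_range] at hi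
  omega

lemma invCount_le_length (l : List ℕ) :
    invCount n ((l.map (simpleT n)).prod) ≤ l.length := by
  induction l with
  | nil => simp [invCount_one]
  | cons c t ih =>
    simp only [List.map_cons, List.prod_cons, List.length_cons]
    by_cases hc : c + 1 ≤ n
    · rcases invStep ((t.map (simpleT n)).prod) c hc with ⟨-, h⟩ | ⟨-, h⟩ <;> omega
    · have : simpleT n c = 1 := by simp [simpleT, hc]
      rw [this, one_mul]
      omega

/-- the explicit reduced word for w0 -/
def wordW : ℕ → List ℕ
  | 0 => []
  | m + 1 => wordW m ++ (List.range (m+1)).reverse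

lemma sigma_apply (m : ℕ) : m ≤ n → ∀ x : Fin (n+1),
    ((((List.range m).reverse.map (simpleT n)).prod x).val)
      = if x.val = 0 then m else if x.val ≤ m then x.val - 1 else x.val := by
  induction m with
  | zero => intro _ x; simp only [List.range_zero, List.reverse_nil, List.map_nil, List.prod_nil, Equiv.Perm.one_apply]; split_ifs <;> omega
  | succ m ih =>
    intro hm x
    have hm' : m ≤ n := by omega
    have hrange : (List.range (m+1)).reverse = m :: (List.range m).reverse := by
      rw [List.range_succ, List.reverse_append]
      simp
    rw [hrange]
    simp only [List.map_cons, List.prod_cons, Equiv.Perm.mul_apply]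
    have hy := ih hm' x
    set y := ((List.range m).reverse.map (simpleT n)).prod x with hydef
    have hst : simpleT n m = Equiv.swap (⟨m, by omega⟩ : Fin (n+1)) ⟨m+1, by omega⟩ := by
      simp [simpleT, hm]
    rw [hst, Equiv.swap_apply_def]
    have hxlt := x.isLt
    have hylt := y.isLt
    by_cases h1 : y = (⟨m, by omega⟩ : Fin (n+1))
    · rw [if_pos h1]
      have hv := congrArg Fin.val h1
      simp only [Fin.val_mk] at hv ⊢
      split_ifs at hy ⊢ <;> omega
    · rw [if_neg h1]
      by_cases h2 : y = (⟨m+1, by omega⟩ : Fin (n+1))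
      · rw [if_pos h2]
        have hv := congrArg Fin.val h2
        simp only [Fin.val_mk] at hv ⊢
        split_ifs at hy ⊢ <;> omega
      · rw [if_neg h2]
        have e1 : (y:ℕ) ≠ m := fun hh => h1 (Fin.ext (by simp [hh]))
        have e2 : (y:ℕ) ≠ m+1 := fun hh => h2 (Fin.ext (by simp [hh]))
        split_ifs at hy ⊢ <;> omega

lemma wordW_prod_apply (m : ℕ) : m ≤ n → ∀ x : Fin (n+1),
    ((((wordW m).map (simpleT n)).prod x).val)
      = if x.val ≤ m then m - x.val else x.val := by
  induction m with
  | zero => intro _ x; simp [wordW]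
  | succ m ih =>
    intro hm x
    have hm' : m ≤ n := by omega
    rw [wordW]
    simp only [List.map_append, List.prod_append, Equiv.Perm.mul_apply]
    have hs := sigma_apply (m+1) hm x
    set y := (((List.range (m+1)).reverse.map (simpleT n)).prod) x with hydef
    have hthis := ih hm' y
    have hxlt := x.isLt
    have hylt := y.isLt
    split_ifs at hs hthis ⊢ <;> omega

lemma wordW_isWord : (∀ c ∈ wordW n, c < n) ∧ ((wordW n).map (simpleT n)).prod = w0 n := by
  constructor
  · suffices h : ∀ m, m ≤ n → ∀ c ∈ wordW m, c < n by exact h n le_rfl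
    intro m
    induction m with
    | zero => intro _ c hc; simp [wordW] at hc
    | succ m ih =>
      intro hm c hc
      rw [wordW] at hc
      rcases List.mem_append.mp hc with h | h
      · exact ih (by omega) c h
      · rw [List.mem_reverse, List.mem_range] at h
        omega
  · ext x
    show ((((wordW n).map (simpleT n)).prod x).val) = ((w0 n) x).val
    rw [wordW_prod_apply n le_rfl x]
    have : ((w0 n) x).val = n - x.val := by
      show (Fin.rev x).val = n - x.val
      rw [Fin.val_rev]
      omega
    rw [this]
    have := x.isLt
    split_ifs <;> omega

lemma wordW_length : (wordW n).length = ∑ i ∈ Finset.range (n+1), i := by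
  induction n with
  | zero => simp [wordW]
  | succ m ih =>
    rw [wordW, List.length_append, ih, List.length_reverse, List.length_range,
      Finset.sum_range_succ _ (m+1)]
end Word

section Main
variable (n : ℕ) (l : List ℕ)

def rPerm (k : ℕ) : Equiv.Perm (Fin (n+1)) := ((l.drop k).map (simpleT n)).prod

def Lev (k : ℕ) : ℕ := ((rPerm n l k) (Fin.last n)).val

variable {n l}

lemma rPerm_step {k : ℕ} (hk : k < l.length) :
    rPerm n l k = simpleT n l[k] * rPerm n l (k+1) := by
  unfold rPerm
  rw [List.drop_eq_getElem_cons hk, List.map_cons, List.prod_cons]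

lemma rPerm_length : rPerm n l l.length = 1 := by
  unfold rPerm
  simp

variable (hred : IsReducedWord n (w0 n) l)
include hred

lemma len_eq : l.length = ∑ i ∈ Finset.range (n+1), i := by
  have h1 : ∑ i ∈ Finset.range (n+1), i ≤ l.length := by
    have := invCount_le_length (n := n) l
    rw [hred.1.2, invCount_w0, card_pairs_lt] at this
    exact this
  have h2 : l.length ≤ ∑ i ∈ Finset.range (n+1), i := by
    rw [hred.2]
    have hmem : (wordW n).length ∈ {r | ∃ l : List ℕ, l.length = r ∧ IsWord n (w0 n) l} :=
      ⟨wordW n, rfl, wordW_isWord⟩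
    calc coxLen n (w0 n) ≤ (wordW n).length := Nat.sInf_le hmem
      _ = _ := wordW_length
  omega

lemma rPerm_zero : rPerm n l 0 = w0 n := by
  unfold rPerm
  rw [List.drop_zero]
  exact hred.1.2

lemma g_exact {k : ℕ} (hk : k < l.length) :
    invCount n (rPerm n l k) = invCount n (rPerm n l (k+1)) + 1 := by
  set N := l.length with hN
  set g : ℕ → ℕ := fun k => invCount n (rPerm n l k) with hg
  have hc : ∀ j (hj : j < N), l[j] < n := fun j hj => hred.1.1 _ (List.getElem_mem hj)
  have g0 : g 0 = N := by
    rw [hg]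
    simp only []
    rw [rPerm_zero hred, invCount_w0, card_pairs_lt, hN, len_eq hred]
  have gN : g N = 0 := by
    rw [hg]; simp only []
    rw [rPerm_length, invCount_one]
  have gstep : ∀ j (hj : j < N), g j ≤ g (j+1) + 1 ∧ g (j+1) ≤ g j + 1 := by
    intro j hj
    simp only [hg]
    have hcj : l[j] + 1 ≤ n := hc j hj
    have := invStep (rPerm n l (j+1)) l[j] hcj
    have hr := rPerm_step (n := n) hj
    rcases this with ⟨-, h⟩ | ⟨-, h⟩ <;> rw [← hr] at h <;> omega
  have gA : ∀ k, k ≤ N → N ≤ g k + k := by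
    intro k
    induction k with
    | zero => intro _; omega
    | succ k ih =>
      intro hk1
      have := gstep k (by omega)
      have := ih (by omega)
      omega
  have gB : ∀ d, g (N - d) ≤ d := by
    intro d
    induction d with
    | zero => simpa using gN.le
    | succ d ih =>
      by_cases hd : d + 1 ≤ N
      · have h1 : N - (d+1) < N := by omega
        have h2 : N - (d+1) + 1 = N - d := by omega
        have := gstep (N - (d+1)) h1
        rw [h2] at this
        omega
      · have : N - (d+1) = 0 := by omega
        rw [this]
        omega
  have e1 : g k ≤ N - k := by have := gB (N - k); rw [(by omega : N - (N-k) = k)] at this; exact this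
  have e2 : g (k+1) ≤ N - (k+1) := by
    have := gB (N - (k+1)); rw [(by omega : N - (N-(k+1)) = k+1)] at this; exact this
  have e3 := gA k (by omega)
  have e4 := gA (k+1) (by omega)
  show g k = g (k+1) + 1
  omega

lemma step_facts {k : ℕ} (hk : k < l.length) :
    Lev n l (k+1) ≠ l[k] ∧ Lev n l k ≠ l[k] + 1 ∧
      (Lev n l (k+1) = Lev n l k ∨ (Lev n l k = l[k] ∧ Lev n l (k+1) = l[k] + 1)) := by
  have hcn : l[k] + 1 ≤ n := hred.1.1 _ (List.getElem_mem hk)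
  set c := l[k] with hcdef
  set w := rPerm n l (k+1) with hw
  set c0 : Fin (n+1) := ⟨c, by omega⟩ with hc0
  set c1 : Fin (n+1) := ⟨c+1, by omega⟩ with hc1
  have hst : simpleT n c = Equiv.swap c0 c1 := by simp [simpleT, hcn]; rfl
  have hlt : w⁻¹ c0 < w⁻¹ c1 := by
    rcases invStep w c hcn with ⟨h1, -⟩ | ⟨-, h2⟩
    · exact h1
    · exfalso
      have := g_exact hred hk
      rw [rPerm_step hk, ← hcdef, ← hw] at this
      omega
  have hne : w (Fin.last n) ≠ c0 := by
    intro hcontra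
    have : w⁻¹ c0 = Fin.last n := by rw [← hcontra]; simp
    rw [this] at hlt
    exact absurd (lt_of_lt_of_le hlt (Fin.le_last _)) (lt_irrefl _)
  have hLk : Lev n l k = ((Equiv.swap c0 c1) (w (Fin.last n))).val := by
    unfold Lev
    rw [rPerm_step hk, ← hcdef, hst]
    rfl
  have hLk1 : Lev n l (k+1) = (w (Fin.last n)).val := rfl
  have hfact1 : Lev n l (k+1) ≠ c := by
    rw [hLk1]
    intro hcontra
    exact hne (Fin.ext hcontra)
  by_cases hcase : w (Fin.last n) = c1
  · have hswap : (Equiv.swap c0 c1) (w (Fin.last n)) = c0 := by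
      rw [hcase, Equiv.swap_apply_right]
    refine ⟨hfact1, ?_, Or.inr ⟨?_, ?_⟩⟩
    · rw [hLk, hswap]; simp [hc0]
    · rw [hLk, hswap]
    · rw [hLk1, hcase]
  · have hswap : (Equiv.swap c0 c1) (w (Fin.last n)) = w (Fin.last n) :=
      Equiv.swap_apply_of_ne_of_ne hne hcase
    have heq : Lev n l k = Lev n l (k+1) := by rw [hLk, hswap, hLk1]
    refine ⟨hfact1, ?_, Or.inl heq.symm⟩
    rw [heq, hLk1]
    intro hcontra
    exact hcase (Fin.ext hcontra)

lemma Lev_zero : Lev n l 0 = 0 := by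
  unfold Lev
  rw [rPerm_zero hred]
  show (Fin.rev (Fin.last n)).val = 0
  simp

omit hred in
lemma Lev_length : Lev n l l.length = n := by
  unfold Lev
  rw [rPerm_length]
  rfl

omit hred in
lemma Lev_le (k : ℕ) : Lev n l k ≤ n := Nat.lt_succ_iff.mp (Fin.isLt _)

lemma Lev_mono {k k' : ℕ} (hkk : k ≤ k') (hk' : k' ≤ l.length) : Lev n l k ≤ Lev n l k' := by
  induction k' with
  | zero =>
    have hk0 : k = 0 := by omega
    rw [hk0]
  | succ k' ih =>
    rcases Nat.lt_or_ge k (k'+1) with hlt | hge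
    · have h1 : Lev n l k ≤ Lev n l k' := ih (by omega) (by omega)
      have := step_facts hred (show k' < l.length by omega)
      omega
    · have : k = k' + 1 := by omega
      rw [this]

end Main

section Main2
variable {n : ℕ} {l : List ℕ} (hred : IsReducedWord n (w0 n) l)
include hred

lemma jump_exists {j : ℕ} (hj : j < n) :
    ∃ k, ∃ (hk : k < l.length), Lev n l k = j ∧ Lev n l (k+1) = j+1 ∧ l[k] = j := by
  set S : Set ℕ := {m | m ≤ l.length ∧ j + 1 ≤ Lev n l m} with hS
  have hne : S.Nonempty := ⟨l.length, le_rfl, by rw [Lev_length]; omega⟩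
  set m := sInf S with hm
  have hmem : m ∈ S := Nat.sInf_mem hne
  have hmem1 : m ≤ l.length := hmem.1
  have hmem2 : j + 1 ≤ Lev n l m := hmem.2
  have hm0 : m ≠ 0 := by
    intro h0
    have := hmem.2
    rw [h0, Lev_zero hred] at this
    omega
  have hknotmem : m - 1 ∉ S := Nat.notMem_of_lt_sInf (by omega)
  have hkN : m - 1 < l.length := by omega
  have hkle : Lev n l (m-1) ≤ j := by
    by_contra hcon
    exact hknotmem ⟨by omega, by omega⟩
  have hstep := step_facts hred hkN
  have hm1 : m - 1 + 1 = m := by omega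
  rw [hm1] at hstep
  have hLm : j + 1 ≤ Lev n l m := hmem.2
  rcases hstep.2.2 with heq | ⟨ha, hb⟩
  · omega
  · exact ⟨m - 1, hkN, by omega, by rw [hm1]; omega, by omega⟩

lemma jump_unique {j k1 k2 : ℕ} (hk1 : k1 < l.length) (hk2 : k2 < l.length)
    (e1 : Lev n l k1 = j) (e2 : Lev n l (k1+1) = j+1)
    (e3 : Lev n l k2 = j) (e4 : Lev n l (k2+1) = j+1) : k1 = k2 := by
  rcases lt_trichotomy k1 k2 with hlt | heq | hgt
  · have := Lev_mono hred (show k1 + 1 ≤ k2 by omega) hk2.le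
    omega
  · exact heq
  · have := Lev_mono hred (show k2 + 1 ≤ k1 by omega) hk1.le
    omega

end Main2

/-- In any reduced word of the longest element of $S_{n+1}$ there is a unique
increasing sequence of positions carrying the letters `(1, 2, ..., n)`
(0-based: `(0, 1, ..., n-1)`). -/
theorem exists_unique_ascending_chain (n : ℕ) (l : List ℕ)
    (h : IsReducedWord n (w0 n) l) :
    ∃! a : Fin n → Fin l.length,
      StrictMono a ∧ ∀ j : Fin n, l.get (a j) = (j : ℕ) := by
  have hred := h
  have hex : ∀ j : Fin n,
      ∃ k, ∃ (hk : k < l.length), Lev n l k = j ∧ Lev n l (k+1) = j+1 ∧ l[k] = j :=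
    fun j => jump_exists hred j.isLt
  choose kf hkf h1 h2 h3 using hex
  refine ⟨fun j => ⟨kf j, hkf j⟩, ⟨?_, ?_⟩, ?_⟩
  · intro j j' hjj
    show (⟨kf j, hkf j⟩ : Fin l.length) < ⟨kf j', hkf j'⟩
    rw [Fin.mk_lt_mk]
    by_contra hcon
    push_neg at hcon
    have hmono := Lev_mono hred hcon (hkf j).le
    rw [h1 j, h1 j'] at hmono
    have hjj' : (j : ℕ) < j' := hjj
    omega
  · intro j
    show l.get ⟨kf j, hkf j⟩ = (j : ℕ)
    simpa using h3 j
  · rintro b ⟨hbmono, hbget⟩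
    have hget : ∀ j : Fin n, l[(b j).val] = (j : ℕ) := by
      intro j
      have := hbget j
      simpa using this
    have hbval : ∀ (t : ℕ) (ht : t < n) (ht' : t + 1 < n),
        ((b ⟨t, ht⟩).val) + 1 ≤ (b ⟨t+1, ht'⟩).val := by
      intro t ht ht'
      have : b ⟨t, ht⟩ < b ⟨t+1, ht'⟩ := hbmono (by rw [Fin.mk_lt_mk]; omega)
      exact this
    have upper : ∀ (m t : ℕ) (ht : t < n), t + m + 1 = n → Lev n l (b ⟨t, ht⟩).val ≤ t := by
      intro m
      induction m with
      | zero =>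
        intro t ht hsum
        have hf := (step_facts hred (b ⟨t, ht⟩).isLt).2.1
        rw [hget ⟨t, ht⟩] at hf
        have := Lev_le (n := n) (l := l) (b ⟨t, ht⟩).val
        simp only [Fin.val_mk] at hf
        omega
      | succ m ih =>
        intro t ht hsum
        have ht' : t + 1 < n := by omega
        have hih := ih (t+1) ht' (by omega)
        have hmono := Lev_mono hred (le_of_lt (hbval t ht ht')) (b ⟨t+1, ht'⟩).isLt.le
        have hf := (step_facts hred (b ⟨t, ht⟩).isLt).2.1
        rw [hget ⟨t, ht⟩] at hf
        simp only [Fin.val_mk] at hf hih hmono ⊢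
        omega
    have upper' : ∀ (t : ℕ) (ht : t < n), Lev n l (b ⟨t, ht⟩).val ≤ t := by
      intro t ht
      exact upper (n - 1 - t) t ht (by omega)
    have exact_ : ∀ (t : ℕ) (ht : t < n),
        Lev n l ((b ⟨t, ht⟩).val) = t ∧ Lev n l ((b ⟨t, ht⟩).val + 1) = t + 1 := by
      intro t
      induction t with
      | zero =>
        intro ht
        have hu := upper' 0 ht
        have hL : Lev n l ((b ⟨0, ht⟩).val) = 0 := by omega
        have hf := step_facts hred (b ⟨0, ht⟩).isLt
        rw [hget ⟨0, ht⟩] at hf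
        simp only [Fin.val_mk] at hf ⊢
        rcases hf.2.2 with heq | ⟨ha, hb⟩ <;> omega
      | succ t ih =>
        intro ht
        have ht0 : t < n := by omega
        have hih := ih ht0
        have hmono := Lev_mono hred (hbval t ht0 ht) (b ⟨t+1, ht⟩).isLt.le
        have hu := upper' (t+1) ht
        have hL : Lev n l ((b ⟨t+1, ht⟩).val) = t + 1 := by omega
        have hf := step_facts hred (b ⟨t+1, ht⟩).isLt
        rw [hget ⟨t+1, ht⟩] at hf
        simp only [Fin.val_mk] at hf ⊢
        rcases hf.2.2 with heq | ⟨ha, hb⟩ <;> omega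
    funext j
    have hj := j.isLt
    have hbj : b j = b ⟨(j : ℕ), hj⟩ := by congr 1
    have he := exact_ (j : ℕ) hj
    rw [← hbj] at he
    apply Fin.ext
    exact jump_unique hred (b j).isLt (hkf j) he.1 he.2 (h1 j) (h2 j)
end

section
/- Let (i_1,...,i_N) be a reduced word of the longest element w_0 of S_{n+1}, let d_1 < ⋯ < d_n be the unique increasing indices with (i_{d_1},...,i_{d_n}) = (n,n-1,...,1), and let a_1 < ⋯ < a_n be the unique increasing indices with (i_{a_1},...,i_{a_n}) = (1,2,...,n). Then the sets {a_1,...,a_n} and {d_1,...,d_n} intersect in exactly one element. -/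
open Equiv List

namespace DAInt

lemma simpleT_val {n c : ℕ} (hc : c < n) (x : Fin (n+1)) :
    (simpleT n c x : ℕ) = if (x:ℕ) = c then c+1 else if (x:ℕ) = c+1 then c else x := by
  rw [simpleT, dif_pos (by omega : c+1 ≤ n), Equiv.swap_apply_def]
  by_cases h1 : (x:ℕ) = c
  · rw [if_pos (by exact Fin.ext h1), if_pos h1]
  · rw [if_neg (fun hh => h1 (by rw [hh])), if_neg h1]
    by_cases h2 : (x:ℕ) = c+1
    · rw [if_pos (by exact Fin.ext h2), if_pos h2]
    · rw [if_neg (fun hh => h2 (by rw [hh])), if_neg h2]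

lemma w0_val {n : ℕ} (x : Fin (n+1)) : ((w0 n) x : ℕ) = n - x := by
  show ((Fin.rev x : Fin (n+1)) : ℕ) = n - x
  rw [Fin.val_rev]; omega

/-- the permutation reversing `{0,…,m}` in `Fin (n+1)` (identity if `m > n`). -/
def revFun (n m : ℕ) : Fin (n+1) → Fin (n+1) := fun x =>
  if h : (x:ℕ) ≤ m ∧ m ≤ n then ⟨m - x, by omega⟩ else x

lemma revFun_invol (n m : ℕ) : Function.Involutive (revFun n m) := by
  intro x
  unfold revFun
  by_cases h : (x:ℕ) ≤ m ∧ m ≤ n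
  · rw [dif_pos h, dif_pos (by simp; omega)]
    exact Fin.ext (by simp; omega)
  · rw [dif_neg h, dif_neg h]

def revPerm (n m : ℕ) : Perm (Fin (n+1)) := (revFun_invol n m).toPerm

lemma revPerm_val {n m : ℕ} (hm : m ≤ n) (x : Fin (n+1)) :
    ((revPerm n m) x : ℕ) = if (x:ℕ) ≤ m then m - x else x := by
  show ((revFun n m x) : ℕ) = _
  unfold revFun
  by_cases h : (x:ℕ) ≤ m
  · rw [dif_pos ⟨h, hm⟩, if_pos h]
  · rw [dif_neg (fun hh => h hh.1), if_neg h]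

/-- block `B_m = [m, m-1, …, 0]` -/
def blockP (n m : ℕ) : Perm (Fin (n+1)) := (((List.range (m+1)).reverse).map (simpleT n)).prod

lemma blockP_val {n : ℕ} : ∀ {m : ℕ}, m < n → ∀ x : Fin (n+1),
    ((blockP n m) x : ℕ) = if (x:ℕ) = 0 then m+1 else if (x:ℕ) ≤ m+1 then x - 1 else x := by
  intro m
  induction m with
  | zero =>
    intro hm x
    have : blockP n 0 = simpleT n 0 := by simp [blockP, List.range_succ]
    rw [this, simpleT_val hm x]
    split_ifs <;> omega
  | succ m ih =>
    intro hm x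
    have hstep : blockP n (m+1) = simpleT n (m+1) * blockP n m := by
      unfold blockP
      rw [List.range_succ, List.reverse_append, List.reverse_singleton]
      simp
    rw [hstep]
    show ((simpleT n (m+1)) ((blockP n m) x) : ℕ) = _
    rw [simpleT_val hm, ih (by omega) x]
    have := x.isLt
    split_ifs <;> omega

/-- the standard reduced word for `w0` -/
def stdWord (n : ℕ) : List ℕ :=
  ((List.range n).map (fun k => (List.range (k+1)).reverse)).flatten

lemma stdWord_partial {n : ℕ} : ∀ m ≤ n,
    ((((List.range m).map (fun k => (List.range (k+1)).reverse)).flatten).map (simpleT n)).prod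
      = revPerm n m := by
  intro m
  induction m with
  | zero =>
    intro _
    ext x
    show ((1 : Perm (Fin (n+1))) x : ℕ) = ((revPerm n 0) x :ℕ)
    rw [revPerm_val (by omega)]
    have := x.isLt
    split_ifs <;> (show (x:ℕ) = _; omega)
  | succ m ih =>
    intro hm
    rw [List.range_succ, List.map_append, List.flatten_append, List.map_append,
      List.prod_append, ih (by omega)]
    have h2 : ((((List.range (m+1)).reverse :: ([] : List (List ℕ))).flatten).map (simpleT n)).prod
        = blockP n m := by
      simp [blockP]
    rw [show ((List.range (m+1)).reverse :: ([] : List (List ℕ))) = [(List.range (m+1)).reverse] from rfl] at h2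
    rw [show (List.map (fun k => (List.range (k+1)).reverse) [m]) = [(List.range (m+1)).reverse] from rfl, h2]
    ext x
    show ((revPerm n m) ((blockP n m) x) : ℕ) = _
    rw [revPerm_val (by omega), blockP_val (by omega) x, revPerm_val hm]
    have := x.isLt
    split_ifs <;> omega

lemma stdWord_isWord (n : ℕ) : IsWord n (w0 n) (stdWord n) := by
  constructor
  · intro c hc
    simp only [stdWord, List.mem_flatten, List.mem_map] at hc
    obtain ⟨bl, ⟨k, hk, rfl⟩, hc⟩ := hc
    rw [List.mem_reverse, List.mem_range] at hc
    rw [List.mem_range] at hk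
    omega
  · rw [show stdWord n = ((List.range n).map (fun k => (List.range (k+1)).reverse)).flatten from rfl,
      stdWord_partial n le_rfl]
    ext x
    rw [revPerm_val le_rfl, w0_val]
    have := x.isLt
    split_ifs <;> omega

lemma stdWord_length (n : ℕ) : (stdWord n).length * 2 = n * (n+1) := by
  have h1 : (stdWord n).length = ((List.range n).map (fun k => k+1)).sum := by
    rw [stdWord, List.length_flatten, List.map_map]
    congr 1
    apply List.map_congr_left
    intro k _
    simp
  rw [h1]
  clear h1
  induction n with
  | zero => simp
  | succ m ihm =>
    rw [List.range_succ, List.map_append, List.sum_append]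
    simp only [List.map_cons, List.map_nil, List.sum_cons, List.sum_nil]
    have hr : (m+1) * (m+1+1) = m * (m+1) + 2*(m+1) := by ring
    omega


/-! ### trajectories -/

def piw (n : ℕ) (l : List ℕ) (t : ℕ) : Perm (Fin (n+1)) :=
  (((l.take t).map (simpleT n)).reverse).prod

def lett (l : List ℕ) (t : ℕ) : ℕ := l.getD t 0

lemma lett_eq {l : List ℕ} {t : ℕ} (ht : t < l.length) : lett l t = l.get ⟨t, ht⟩ := by
  rw [lett, List.getD_eq_getElem l 0 ht, List.get_eq_getElem]

lemma lett_lt {n : ℕ} {l : List ℕ} (hl : ∀ c ∈ l, c < n) {t : ℕ} (ht : t < l.length) :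
    lett l t < n := by
  rw [lett_eq ht]; exact hl _ (l.get_mem _)

lemma piw_zero (n : ℕ) (l : List ℕ) : piw n l 0 = 1 := by simp [piw]

lemma piw_succ {n : ℕ} {l : List ℕ} {t : ℕ} (ht : t < l.length) :
    piw n l (t+1) = simpleT n (lett l t) * piw n l t := by
  unfold piw
  rw [List.take_succ, List.getElem?_eq_getElem ht, lett_eq ht, List.get_eq_getElem]
  rw [show (some l[t]).toList = [l[t]] from rfl, List.map_append, List.reverse_append]
  simp

lemma piw_word {n : ℕ} {l : List ℕ} (hw : IsWord n (w0 n) l) :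
    piw n l l.length = w0 n := by
  unfold piw
  rw [List.take_of_length_le le_rfl, List.prod_reverse_noncomm, List.map_map]
  have : (simpleT n)⁻¹' ∅ = ∅ := rfl
  have hmm : List.map ((fun x => x⁻¹) ∘ simpleT n) l = List.map (simpleT n) l := by
    apply List.map_congr_left
    intro c _
    show (simpleT n c)⁻¹ = simpleT n c
    unfold simpleT; split_ifs
    · exact Equiv.swap_inv _ _
    · rfl
  rw [hmm, hw.2]
  rw [← mul_eq_one_iff_inv_eq]
  ext x
  show (((w0 n) ((w0 n) x)) : ℕ) = ((1 : Perm (Fin (n+1))) x : ℕ)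
  rw [w0_val, w0_val]
  have := x.isLt
  show _ = (x : ℕ)
  omega

/-! ### flips -/

def flipAt (n : ℕ) (l : List ℕ) (i j : Fin (n+1)) (t : ℕ) : Prop :=
  ((piw n l t i : ℕ) = lett l t ∧ (piw n l t j : ℕ) = lett l t + 1) ∨
  ((piw n l t j : ℕ) = lett l t ∧ (piw n l t i : ℕ) = lett l t + 1)

instance (n : ℕ) (l : List ℕ) (i j : Fin (n+1)) : DecidablePred (flipAt n l i j) :=
  fun _ => by unfold flipAt; infer_instance

lemma flip_step {n : ℕ} {l : List ℕ} (hl : ∀ c ∈ l, c < n) {t : ℕ} (ht : t < l.length)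
    {i j : Fin (n+1)} (hij : i ≠ j) :
    ((piw n l (t+1) i : ℕ) < (piw n l (t+1) j : ℕ) ↔
      (((piw n l t i : ℕ) < (piw n l t j : ℕ)) ↔ ¬ flipAt n l i j t)) := by
  have hc : lett l t < n := lett_lt hl ht
  have hne : ((piw n l t i : ℕ)) ≠ ((piw n l t j : ℕ)) := by
    intro hh
    exact hij ((piw n l t).injective (Fin.ext hh))
  have hx := simpleT_val hc (piw n l t i)
  have hy := simpleT_val hc (piw n l t j)
  rw [piw_succ ht]
  show ((simpleT n (lett l t)) (piw n l t i) : ℕ) < ((simpleT n (lett l t)) (piw n l t j) : ℕ) ↔ _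
  unfold flipAt
  rw [hx, hy]
  split_ifs <;> omega

/-- number of flips of the pair `(i,j)` before time `t` -/
def cnt (n : ℕ) (l : List ℕ) (i j : Fin (n+1)) (t : ℕ) : ℕ :=
  ((Finset.range t).filter (flipAt n l i j)).card

lemma cnt_succ {n : ℕ} {l : List ℕ} {i j : Fin (n+1)} (t : ℕ) :
    cnt n l i j (t+1) = cnt n l i j t + (if flipAt n l i j t then 1 else 0) := by
  unfold cnt
  rw [Finset.range_add_one, Finset.filter_insert]
  split_ifs with hf
  · rw [Finset.card_insert_of_notMem (by simp)]
  · rfl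

lemma ord_iff {n : ℕ} {l : List ℕ} (hl : ∀ c ∈ l, c < n) {i j : Fin (n+1)} (hij : i < j) :
    ∀ t, t ≤ l.length → (((piw n l t i : ℕ) < (piw n l t j : ℕ)) ↔ Even (cnt n l i j t)) := by
  intro t
  induction t with
  | zero =>
    intro _
    simp [piw_zero, cnt, Fin.lt_def.mp hij]
  | succ t ih =>
    intro ht
    have ht' : t < l.length := by omega
    have hstep := flip_step hl ht' (ne_of_lt hij)
    rw [hstep, ih (by omega), cnt_succ t]
    by_cases hf : flipAt n l i j t
    · simp [hf, Nat.even_add_one]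
    · simp [hf]

lemma cnt_odd {n : ℕ} {l : List ℕ} (hw : IsWord n (w0 n) l) {i j : Fin (n+1)} (hij : i < j) :
    ¬ Even (cnt n l i j l.length) := by
  intro hev
  have := (ord_iff hw.1 hij l.length le_rfl).mpr hev
  rw [piw_word hw, w0_val, w0_val] at this
  have h1 := i.isLt
  have h2 := j.isLt
  have := Fin.lt_def.mp hij
  omega


lemma uniq_pair {n : ℕ} {l : List ℕ} (hl : ∀ c ∈ l, c < n) {t : ℕ} (ht : t < l.length) :
    ((Finset.univ.filter (fun p : Fin (n+1) × Fin (n+1) => p.1 < p.2)).filter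
       (fun p => flipAt n l p.1 p.2 t)).card = 1 := by
  have hc : lett l t < n := lett_lt hl ht
  have hcf : lett l t < n + 1 := by omega
  have hcf1 : lett l t + 1 < n + 1 := by omega
  set σ := piw n l t with hσ
  have hx : ∀ z, ((σ z : ℕ) = lett l t ↔ z = σ.symm ⟨lett l t, hcf⟩) := by
    intro z
    rw [Equiv.eq_symm_apply, Fin.ext_iff]
  have hy : ∀ z, ((σ z : ℕ) = lett l t + 1 ↔ z = σ.symm ⟨lett l t + 1, hcf1⟩) := by
    intro z
    rw [Equiv.eq_symm_apply, Fin.ext_iff]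
  set x := σ.symm ⟨lett l t, hcf⟩ with hxd
  set y := σ.symm ⟨lett l t + 1, hcf1⟩ with hyd
  have hxy : x ≠ y := by
    intro hh
    have h2 := congrArg σ hh
    rw [hxd, hyd, Equiv.apply_symm_apply, Equiv.apply_symm_apply] at h2
    exact absurd (Fin.ext_iff.mp h2) (by simp)
  have hmem : ∀ p : Fin (n+1) × Fin (n+1),
      (p.1 < p.2 ∧ flipAt n l p.1 p.2 t) ↔ p = (if x < y then (x, y) else (y, x)) := by
    intro p
    unfold flipAt
    constructor
    · rintro ⟨hord, hf | hf⟩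
      · have h1 := (hx p.1).mp hf.1
        have h2 := (hy p.2).mp hf.2
        have hlt : x < y := by rw [← h1, ← h2]; exact hord
        rw [if_pos hlt, Prod.ext_iff]; exact ⟨h1, h2⟩
      · have h1 := (hx p.2).mp hf.1
        have h2 := (hy p.1).mp hf.2
        have hlt : y < x := by rw [← h1, ← h2]; exact hord
        rw [if_neg (fun hh => absurd (lt_trans hlt hh) (lt_irrefl _)), Prod.ext_iff]
        exact ⟨h2, h1⟩
    · intro hp
      by_cases hlt : x < y
      · rw [if_pos hlt] at hp
        subst hp
        exact ⟨hlt, Or.inl ⟨(hx x).mpr rfl, (hy y).mpr rfl⟩⟩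
      · rw [if_neg hlt] at hp
        subst hp
        exact ⟨lt_of_le_of_ne (not_lt.mp hlt) (Ne.symm hxy),
          Or.inr ⟨(hx x).mpr rfl, (hy y).mpr rfl⟩⟩
  have hset : ((Finset.univ.filter (fun p : Fin (n+1) × Fin (n+1) => p.1 < p.2)).filter
       (fun p => flipAt n l p.1 p.2 t)) = {if x < y then (x, y) else (y, x)} := by
    ext p
    simp only [Finset.mem_filter, Finset.mem_univ, true_and, Finset.mem_singleton]
    exact hmem p
  rw [hset, Finset.card_singleton]

lemma cardP (n : ℕ) :
    (Finset.univ.filter (fun p : Fin (n+1) × Fin (n+1) => p.1 < p.2)).card * 2 = n * (n+1) := by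
  rw [Finset.card_filter, Fintype.sum_prod_type]
  have h1 : ∀ a : Fin (n+1), (∑ b : Fin (n+1), if a < b then (1:ℕ) else 0) = n - (a:ℕ) := by
    intro a
    rw [← Finset.card_filter]
    have : Finset.filter (fun b => a < b) Finset.univ = Finset.Ioi a := by ext b; simp
    rw [this, Fin.card_Ioi]
    omega
  rw [Finset.sum_congr rfl (fun a _ => h1 a)]
  have h2 : (∑ a : Fin (n+1), (n - (a:ℕ))) = ∑ k ∈ Finset.range (n+1), (n - k) :=
    Fin.sum_univ_eq_sum_range (fun k => n - k) (n+1)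
  have h3 : (∑ k ∈ Finset.range (n+1), (n - k)) = ∑ k ∈ Finset.range (n+1), k := by
    have := Finset.sum_range_reflect (fun k => k) (n+1)
    simpa using this
  have h4 : (∑ i ∈ Finset.range (n+1), i) * 2 = (n+1) * n := by
    simpa using Finset.sum_range_id_mul_two (n+1)
  have h5 : (n+1) * n = n * (n+1) := Nat.mul_comm _ _
  rw [h2, h3]
  omega

lemma flips_once {n : ℕ} {l : List ℕ} (hred : IsReducedWord n (w0 n) l)
    {i j : Fin (n+1)} (hij : i < j) :
    ((Finset.range l.length).filter (flipAt n l i j)).card = 1 := by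
  classical
  set P := (Finset.univ.filter (fun p : Fin (n+1) × Fin (n+1) => p.1 < p.2)) with hP
  set N := l.length with hN
  have hsum : (∑ p ∈ P, ((Finset.range N).filter (flipAt n l p.1 p.2)).card) = N := by
    have h1 : ∀ p : Fin (n+1) × Fin (n+1),
        ((Finset.range N).filter (flipAt n l p.1 p.2)).card
          = ∑ t ∈ Finset.range N, if flipAt n l p.1 p.2 t then 1 else 0 := fun p =>
      Finset.card_filter _ _
    rw [Finset.sum_congr rfl (fun p _ => h1 p), Finset.sum_comm]
    have h2 : ∀ t ∈ Finset.range N, (∑ p ∈ P, if flipAt n l p.1 p.2 t then (1:ℕ) else 0) = 1 := by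
      intro t htm
      rw [← Finset.card_filter]
      exact uniq_pair hred.1.1 (Finset.mem_range.mp htm)
    rw [Finset.sum_congr rfl h2, Finset.sum_const, smul_eq_mul, mul_one, Finset.card_range]
  have hpos : ∀ p ∈ P, 1 ≤ ((Finset.range N).filter (flipAt n l p.1 p.2)).card := by
    intro p hp
    rw [hP, Finset.mem_filter] at hp
    have hodd := cnt_odd hred.1 hp.2
    unfold cnt at hodd
    rcases Nat.eq_zero_or_pos (((Finset.range N).filter (flipAt n l p.1 p.2)).card) with h0 | h0
    · exact absurd (h0 ▸ Even.zero) hodd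
    · exact h0
  have hcox : N ≤ (stdWord n).length := by
    rw [hN, hred.2]
    exact Nat.sInf_le ⟨stdWord n, rfl, stdWord_isWord n⟩
  have hPcard : P.card = (stdWord n).length := by
    have hA := cardP n
    rw [← hP] at hA
    have hB := stdWord_length n
    omega
  have hle : P.card ≤ N := by
    calc P.card = ∑ _p ∈ P, 1 := by rw [Finset.sum_const, smul_eq_mul, mul_one]
    _ ≤ ∑ p ∈ P, ((Finset.range N).filter (flipAt n l p.1 p.2)).card :=
        Finset.sum_le_sum hpos
    _ = N := hsum
  have hNP : N = P.card := by omega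
  by_contra hne
  have hij2 : (i, j) ∈ P := by rw [hP, Finset.mem_filter]; exact ⟨Finset.mem_univ _, hij⟩
  have h1le : 1 ≤ ((Finset.range N).filter (flipAt n l i j)).card := hpos _ hij2
  have h2le : 2 ≤ ((Finset.range N).filter (flipAt n l i j)).card := by omega
  have : (∑ _p ∈ P, 1) < ∑ p ∈ P, ((Finset.range N).filter (flipAt n l p.1 p.2)).card := by
    refine Finset.sum_lt_sum hpos ⟨(i,j), hij2, ?_⟩
    show 1 < ((Finset.range N).filter (flipAt n l i j)).card
    omega
  rw [Finset.sum_const, smul_eq_mul, mul_one, hsum] at this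
  omega

lemma ord_char {n : ℕ} {l : List ℕ} (hl : ∀ c ∈ l, c < n) {i j : Fin (n+1)} (hij : i < j)
    {τ : ℕ} (hτ : (Finset.range l.length).filter (flipAt n l i j) = {τ}) :
    ∀ t ≤ l.length, ((piw n l t i : ℕ) < (piw n l t j : ℕ) ↔ t ≤ τ) := by
  have hτmem : τ ∈ (Finset.range l.length).filter (flipAt n l i j) := by
    rw [hτ]; exact Finset.mem_singleton_self τ
  rw [Finset.mem_filter, Finset.mem_range] at hτmem
  intro t ht
  rw [ord_iff hl hij t ht]
  by_cases hcase : t ≤ τ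
  · have h0 : cnt n l i j t = 0 := by
      unfold cnt
      rw [Finset.card_eq_zero, Finset.filter_eq_empty_iff]
      intro s hs hfs
      rw [Finset.mem_range] at hs
      have hsmem : s ∈ (Finset.range l.length).filter (flipAt n l i j) := by
        rw [Finset.mem_filter, Finset.mem_range]
        exact ⟨by omega, hfs⟩
      rw [hτ, Finset.mem_singleton] at hsmem
      omega
    rw [h0]
    simp [hcase]
  · have h1 : cnt n l i j t = 1 := by
      unfold cnt
      rw [Finset.card_eq_one]
      refine ⟨τ, ?_⟩
      ext s
      rw [Finset.mem_filter, Finset.mem_range, Finset.mem_singleton]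
      constructor
      · rintro ⟨hs, hfs⟩
        have hsmem : s ∈ (Finset.range l.length).filter (flipAt n l i j) := by
          rw [Finset.mem_filter, Finset.mem_range]
          exact ⟨by omega, hfs⟩
        rw [hτ, Finset.mem_singleton] at hsmem
        exact hsmem
      · rintro rfl
        exact ⟨by omega, hτmem.2⟩
    rw [h1]
    simp [hcase, Nat.even_add_one]

lemma perm_row {m : ℕ} (σ : Perm (Fin m)) (x : Fin m) :
    (Finset.univ.filter (fun r => σ r < σ x)).card = (σ x : ℕ) := by
  rw [← Fin.card_Iio (σ x)]
  apply Finset.card_bij (fun r _ => σ r)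
  · intro r hr
    rw [Finset.mem_filter] at hr
    rw [Finset.mem_Iio]
    exact hr.2
  · intro r1 _ r2 _ hh
    exact σ.injective hh
  · intro b hb
    rw [Finset.mem_Iio] at hb
    refine ⟨σ.symm b, ?_, by simp⟩
    rw [Finset.mem_filter]
    simp [hb]

def Rrow (n : ℕ) (l : List ℕ) (t : ℕ) : ℕ := (piw n l t ⟨n, Nat.lt_succ_self n⟩ : ℕ)

def Srow (n : ℕ) (l : List ℕ) (t : ℕ) : ℕ := (piw n l t ⟨0, Nat.succ_pos n⟩ : ℕ)

lemma Rrow_le (n : ℕ) (l : List ℕ) (t : ℕ) : Rrow n l t ≤ n :=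
  Nat.lt_succ_iff.mp (piw n l t _).isLt

lemma Srow_le (n : ℕ) (l : List ℕ) (t : ℕ) : Srow n l t ≤ n :=
  Nat.lt_succ_iff.mp (piw n l t _).isLt

lemma Rrow_zero (n : ℕ) (l : List ℕ) : Rrow n l 0 = n := by
  unfold Rrow; rw [piw_zero]; rfl

lemma Srow_zero (n : ℕ) (l : List ℕ) : Srow n l 0 = 0 := by
  unfold Srow; rw [piw_zero]; rfl

lemma Rrow_N {n : ℕ} {l : List ℕ} (hw : IsWord n (w0 n) l) : Rrow n l l.length = 0 := by
  unfold Rrow; rw [piw_word hw, w0_val]; simp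

lemma Srow_N {n : ℕ} {l : List ℕ} (hw : IsWord n (w0 n) l) : Srow n l l.length = n := by
  unfold Srow; rw [piw_word hw, w0_val]; exact Nat.sub_zero n

lemma Rrow_succ {n : ℕ} {l : List ℕ} (hl : ∀ c ∈ l, c < n) {t : ℕ} (ht : t < l.length) :
    Rrow n l (t+1) = if Rrow n l t = lett l t then lett l t + 1
      else if Rrow n l t = lett l t + 1 then lett l t else Rrow n l t := by
  unfold Rrow
  rw [piw_succ ht]
  exact simpleT_val (lett_lt hl ht) _

lemma Srow_succ {n : ℕ} {l : List ℕ} (hl : ∀ c ∈ l, c < n) {t : ℕ} (ht : t < l.length) :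
    Srow n l (t+1) = if Srow n l t = lett l t then lett l t + 1
      else if Srow n l t = lett l t + 1 then lett l t else Srow n l t := by
  unfold Srow
  rw [piw_succ ht]
  exact simpleT_val (lett_lt hl ht) _

lemma Rrow_mono {n : ℕ} {l : List ℕ} (hred : IsReducedWord n (w0 n) l) :
    ∀ {s t : ℕ}, s ≤ t → t ≤ l.length → Rrow n l t ≤ Rrow n l s := by
  intro s t hst htN
  have key : ∀ u, u ≤ l.length →
      Rrow n l u = (Finset.univ.filter
        (fun r => piw n l u r < piw n l u ⟨n, Nat.lt_succ_self n⟩)).card :=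
    fun u _ => (perm_row (piw n l u) _).symm
  rw [key t htN, key s (le_trans hst htN)]
  apply Finset.card_le_card
  intro r hr
  rw [Finset.mem_filter] at hr ⊢
  refine ⟨Finset.mem_univ _, ?_⟩
  have hlt := hr.2
  have hrb : r < (⟨n, Nat.lt_succ_self n⟩ : Fin (n+1)) := by
    rw [Fin.lt_def]
    have h1 := r.isLt
    have h2 : r ≠ ⟨n, Nat.lt_succ_self n⟩ := by
      intro hh
      rw [hh] at hlt
      exact lt_irrefl _ hlt
    have h3 : (r : ℕ) ≠ n := fun hh => h2 (Fin.ext hh)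
    show (r : ℕ) < n
    omega
  obtain ⟨τ, hτ⟩ := Finset.card_eq_one.mp (flips_once hred hrb)
  have hct := ord_char hred.1.1 hrb hτ t htN
  have hcs := ord_char hred.1.1 hrb hτ s (le_trans hst htN)
  rw [Fin.lt_def] at hlt ⊢
  have : t ≤ τ := hct.mp hlt
  exact hcs.mpr (by omega)

lemma Srow_mono {n : ℕ} {l : List ℕ} (hred : IsReducedWord n (w0 n) l) :
    ∀ {s t : ℕ}, s ≤ t → t ≤ l.length → Srow n l s ≤ Srow n l t := by
  intro s t hst htN
  have key : ∀ u, u ≤ l.length →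
      Srow n l u = (Finset.univ.filter
        (fun r => piw n l u r < piw n l u ⟨0, Nat.succ_pos n⟩)).card :=
    fun u _ => (perm_row (piw n l u) _).symm
  rw [key t htN, key s (le_trans hst htN)]
  apply Finset.card_le_card
  intro r hr
  rw [Finset.mem_filter] at hr ⊢
  refine ⟨Finset.mem_univ _, ?_⟩
  have hlt := hr.2
  have hrb : (⟨0, Nat.succ_pos n⟩ : Fin (n+1)) < r := by
    rw [Fin.lt_def]
    have h2 : r ≠ ⟨0, Nat.succ_pos n⟩ := by
      intro hh
      rw [hh] at hlt
      exact lt_irrefl _ hlt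
    have h3 : (r : ℕ) ≠ 0 := fun hh => h2 (Fin.ext hh)
    show 0 < (r : ℕ)
    omega
  obtain ⟨τ, hτ⟩ := Finset.card_eq_one.mp (flips_once hred hrb)
  have hct := ord_char hred.1.1 hrb hτ t htN
  have hcs := ord_char hred.1.1 hrb hτ s (le_trans hst htN)
  rw [Fin.lt_def] at hlt ⊢
  have h4 : ¬ ((piw n l s ⟨0, Nat.succ_pos n⟩ : ℕ) < (piw n l s r : ℕ)) := by omega
  have h5 : ¬ (s ≤ τ) := fun hh => h4 (hcs.mpr hh)
  have h6 : ¬ (t ≤ τ) := by omega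
  have h7 : ¬ ((piw n l t ⟨0, Nat.succ_pos n⟩ : ℕ) < (piw n l t r : ℕ)) := fun hh => h6 (hct.mp hh)
  have h8 : (piw n l t ⟨0, Nat.succ_pos n⟩ : ℕ) ≠ (piw n l t r : ℕ) := by
    intro hh
    have h9 : r = (⟨0, Nat.succ_pos n⟩ : Fin (n+1)) := ((piw n l t).injective (Fin.ext hh)).symm
    rw [h9] at hlt
    exact lt_irrefl _ hlt
  omega

lemma Rrow_ne_lett {n : ℕ} {l : List ℕ} (hred : IsReducedWord n (w0 n) l) {t : ℕ}
    (ht : t < l.length) : Rrow n l t ≠ lett l t := by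
  intro hh
  have hs := Rrow_succ hred.1.1 ht
  rw [if_pos hh] at hs
  have hm := Rrow_mono hred (show t ≤ t+1 by omega) (show t+1 ≤ l.length by omega)
  omega

lemma Srow_ne_lett1 {n : ℕ} {l : List ℕ} (hred : IsReducedWord n (w0 n) l) {t : ℕ}
    (ht : t < l.length) : Srow n l t ≠ lett l t + 1 := by
  intro hh
  have hs := Srow_succ hred.1.1 ht
  rw [if_neg (by omega), if_pos hh] at hs
  have hm := Srow_mono hred (show t ≤ t+1 by omega) (show t+1 ≤ l.length by omega)
  omega

lemma drop_spec {n : ℕ} {l : List ℕ} (hred : IsReducedWord n (w0 n) l) {v : ℕ} (hv : v < n) :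
    ∃ τ, τ + 1 ≤ l.length ∧ Rrow n l τ = v + 1 ∧ Rrow n l (τ+1) = v ∧ lett l τ = v ∧
      (∀ q ≤ l.length, (Rrow n l q ≤ v ↔ τ + 1 ≤ q)) := by
  classical
  have hex : ∃ t, Rrow n l t ≤ v ∨ l.length ≤ t := ⟨l.length, Or.inl (by rw [Rrow_N hred.1]; omega)⟩
  have hFle : Nat.find hex ≤ l.length := Nat.find_le (Or.inl (by rw [Rrow_N hred.1]; omega))
  set F := Nat.find hex with hFd
  have hFspec : Rrow n l F ≤ v ∨ l.length ≤ F := Nat.find_spec hex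
  have hF1 : 1 ≤ F := by
    rcases Nat.eq_zero_or_pos F with h0 | h0
    · exfalso
      rw [h0] at hFspec
      have hR0 := Rrow_zero n l
      rcases hFspec with h1 | h1
      · omega
      · have hN0 : l.length = 0 := by omega
        have := Rrow_N hred.1
        rw [hN0] at this
        omega
    · exact h0
  have hmin : ¬ (Rrow n l (F-1) ≤ v ∨ l.length ≤ F - 1) := Nat.find_min hex (by omega)
  push_neg at hmin
  obtain ⟨hRτ, hτN⟩ := hmin
  have hRF : Rrow n l F ≤ v := by
    rcases hFspec with h1 | h1
    · exact h1
    · have hFN : F = l.length := by omega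
      rw [hFN, Rrow_N hred.1]
      omega
  refine ⟨F - 1, by omega, ?_⟩
  have hstep := Rrow_succ hred.1.1 (show F - 1 < l.length by omega)
  have hne := Rrow_ne_lett hred (show F - 1 < l.length by omega)
  have hFF : F - 1 + 1 = F := by omega
  rw [hFF] at hstep ⊢
  split_ifs at hstep with h1 h2
  · exact absurd h1 hne
  · have hlv : lett l (F-1) = v := by omega
    refine ⟨by omega, by omega, hlv, ?_⟩
    intro q hq
    constructor
    · intro hqv
      by_contra hc
      have := Nat.find_min hex (show q < F by omega)
      push_neg at this
      omega
    · intro hFq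
      have := Rrow_mono hred (show F ≤ q from hFq) hq
      omega
  · omega

lemma rise_spec {n : ℕ} {l : List ℕ} (hred : IsReducedWord n (w0 n) l) {v : ℕ} (hv : v < n) :
    ∃ τ, τ + 1 ≤ l.length ∧ Srow n l τ = v ∧ Srow n l (τ+1) = v + 1 ∧ lett l τ = v ∧
      (∀ q ≤ l.length, (v + 1 ≤ Srow n l q ↔ τ + 1 ≤ q)) := by
  classical
  have hex : ∃ t, v + 1 ≤ Srow n l t ∨ l.length ≤ t :=
    ⟨l.length, Or.inl (by rw [Srow_N hred.1]; omega)⟩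
  have hFle : Nat.find hex ≤ l.length := Nat.find_le (Or.inl (by rw [Srow_N hred.1]; omega))
  set F := Nat.find hex with hFd
  have hFspec : v + 1 ≤ Srow n l F ∨ l.length ≤ F := Nat.find_spec hex
  have hF1 : 1 ≤ F := by
    rcases Nat.eq_zero_or_pos F with h0 | h0
    · exfalso
      rw [h0] at hFspec
      have hS0 := Srow_zero n l
      rcases hFspec with h1 | h1
      · omega
      · have hN0 : l.length = 0 := by omega
        have := Srow_N hred.1
        rw [hN0] at this
        omega
    · exact h0
  have hmin : ¬ (v + 1 ≤ Srow n l (F-1) ∨ l.length ≤ F - 1) := Nat.find_min hex (by omega)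
  push_neg at hmin
  obtain ⟨hSτ, hτN⟩ := hmin
  have hSF : v + 1 ≤ Srow n l F := by
    rcases hFspec with h1 | h1
    · exact h1
    · have hFN : F = l.length := by omega
      rw [hFN, Srow_N hred.1]
      omega
  refine ⟨F - 1, by omega, ?_⟩
  have hstep := Srow_succ hred.1.1 (show F - 1 < l.length by omega)
  have hne := Srow_ne_lett1 hred (show F - 1 < l.length by omega)
  have hFF : F - 1 + 1 = F := by omega
  rw [hFF] at hstep ⊢
  by_cases h1 : Srow n l (F-1) = lett l (F-1)
  · rw [if_pos h1] at hstep
    have hlv : lett l (F-1) = v := by omega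
    refine ⟨by omega, by omega, hlv, ?_⟩
    intro q hq
    constructor
    · intro hqv
      by_contra hc
      have := Nat.find_min hex (show q < F by omega)
      push_neg at this
      omega
    · intro hFq
      have := Srow_mono hred (show F ≤ q from hFq) hq
      omega
  · by_cases h2 : Srow n l (F-1) = lett l (F-1) + 1
    · exact absurd h2 hne
    · rw [if_neg h1, if_neg h2] at hstep
      omega

end DAInt

open DAInt in
/-- The descending and ascending chains of a reduced word of the longest element
intersect in exactly one position. -/
theorem descending_ascending_intersect_unique (n : ℕ) (hn : 0 < n) (l : List ℕ)
    (h : IsReducedWord n (w0 n) l)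
    (d a : Fin n → Fin l.length)
    (hd : StrictMono d) (hdval : ∀ j : Fin n, l.get (d j) = n - 1 - (j : ℕ))
    (ha : StrictMono a) (haval : ∀ j : Fin n, l.get (a j) = (j : ℕ)) :
    ∃! x : Fin l.length, (∃ i, d i = x) ∧ (∃ i, a i = x) := by
  have hl := h.1.1
  have hTD0 : ∀ v : Fin n, ∃ τ, τ + 1 ≤ l.length ∧ Rrow n l τ = (v:ℕ) + 1 ∧ Rrow n l (τ+1) = (v:ℕ) ∧
      lett l τ = (v:ℕ) ∧ (∀ q ≤ l.length, (Rrow n l q ≤ (v:ℕ) ↔ τ + 1 ≤ q)) :=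
    fun v => drop_spec h v.isLt
  choose TD hTD using hTD0
  have hTU0 : ∀ v : Fin n, ∃ τ, τ + 1 ≤ l.length ∧ Srow n l τ = (v:ℕ) ∧ Srow n l (τ+1) = (v:ℕ) + 1 ∧
      lett l τ = (v:ℕ) ∧ (∀ q ≤ l.length, ((v:ℕ) + 1 ≤ Srow n l q ↔ τ + 1 ≤ q)) :=
    fun v => rise_spec h v.isLt
  choose TU hTU using hTU0
  have hTDanti : ∀ v w : Fin n, (v:ℕ) < (w:ℕ) → TD w < TD v := by
    intro v w hvw
    obtain ⟨h1, h2, _, _, _⟩ := hTD v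
    obtain ⟨_, _, _, _, hw5⟩ := hTD w
    have := (hw5 (TD v) (by omega)).mp (by omega)
    omega
  have hTUmono : ∀ v w : Fin n, (v:ℕ) < (w:ℕ) → TU v < TU w := by
    intro v w hvw
    obtain ⟨h1, h2, _, _, _⟩ := hTU w
    obtain ⟨_, _, _, _, hv5⟩ := hTU v
    have := (hv5 (TU w) (by omega)).mp (by omega)
    omega
  have occR : ∀ (q : ℕ), q < l.length → ∀ (v : ℕ) (hv : v < n), lett l q = v →
      q = TD ⟨v, hv⟩ ∨
      (v + 2 ≤ Rrow n l q ∧ ∃ hb : v + 1 < n, q ≤ TD ⟨v+1, hb⟩) ∨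
      (Rrow n l q + 1 ≤ v ∧ 1 ≤ v ∧ TD ⟨v-1, by omega⟩ + 1 ≤ q) := by
    intro q hq v hv hlq
    have hne : Rrow n l q ≠ v := by
      have := Rrow_ne_lett h hq
      rw [hlq] at this
      exact this
    by_cases hA : Rrow n l q = v + 1
    · left
      have hstep := Rrow_succ h.1.1 hq
      rw [hlq, if_neg hne, if_pos hA] at hstep
      obtain ⟨hT1, hT2, hT3, hT4, hT5⟩ := hTD ⟨v, hv⟩
      simp only [Fin.val_mk] at hT1 hT2 hT3 hT4 hT5
      have hc1 := hT5 q (le_of_lt hq)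
      have hc2 := hT5 (q+1) (by omega)
      omega
    · by_cases hB : v + 2 ≤ Rrow n l q
      · right; left
        have hb : v + 1 < n := by
          have := Rrow_le n l q
          by_contra hc
          omega
        refine ⟨hB, hb, ?_⟩
        obtain ⟨hT1, _, _, _, hT5⟩ := hTD ⟨v+1, hb⟩
        simp only [Fin.val_mk] at hT5
        have hc1 := hT5 q (le_of_lt hq)
        omega
      · right; right
        have hv1 : 1 ≤ v := by omega
        refine ⟨by omega, hv1, ?_⟩
        obtain ⟨hT1, _, _, _, hT5⟩ := hTD ⟨v-1, by omega⟩
        simp only [Fin.val_mk] at hT5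
        have hc1 := hT5 q (le_of_lt hq)
        omega
  have occS : ∀ (q : ℕ), q < l.length → ∀ (v : ℕ) (hv : v < n), lett l q = v →
      q = TU ⟨v, hv⟩ ∨
      (v + 2 ≤ Srow n l q ∧ ∃ hb : v + 1 < n, TU ⟨v+1, hb⟩ + 1 ≤ q) ∨
      (Srow n l q + 1 ≤ v ∧ 1 ≤ v ∧ q ≤ TU ⟨v-1, by omega⟩) := by
    intro q hq v hv hlq
    have hne : Srow n l q ≠ v + 1 := by
      have := Srow_ne_lett1 h hq
      rw [hlq] at this
      exact this
    by_cases hA : Srow n l q = v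
    · left
      have hstep := Srow_succ h.1.1 hq
      rw [hlq, if_pos hA] at hstep
      obtain ⟨hT1, hT2, hT3, hT4, hT5⟩ := hTU ⟨v, hv⟩
      simp only [Fin.val_mk] at hT1 hT2 hT3 hT4 hT5
      have hc1 := hT5 q (le_of_lt hq)
      have hc2 := hT5 (q+1) (by omega)
      omega
    · by_cases hB : v + 2 ≤ Srow n l q
      · right; left
        have hb : v + 1 < n := by
          have := Srow_le n l q
          by_contra hc
          omega
        refine ⟨hB, hb, ?_⟩
        obtain ⟨hT1, _, _, _, hT5⟩ := hTU ⟨v+1, hb⟩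
        simp only [Fin.val_mk] at hT5
        have hc1 := hT5 q (le_of_lt hq)
        omega
      · right; right
        have hv1 : 1 ≤ v := by omega
        refine ⟨by omega, hv1, ?_⟩
        obtain ⟨hT1, _, _, _, hT5⟩ := hTU ⟨v-1, by omega⟩
        simp only [Fin.val_mk] at hT5
        have hc1 := hT5 q (le_of_lt hq)
        omega
  have hdval' : ∀ j : Fin n, lett l ((d j : Fin l.length) : ℕ) = n - 1 - (j:ℕ) := by
    intro j
    rw [lett_eq (d j).isLt]
    exact hdval j
  have haval' : ∀ j : Fin n, lett l ((a j : Fin l.length) : ℕ) = (j:ℕ) := by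
    intro j
    rw [lett_eq (a j).isLt]
    exact haval j
  have hdlow : ∀ jv (hj : jv < n) (w : Fin n), (w:ℕ) = n - 1 - jv →
      TD w ≤ ((d ⟨jv, hj⟩ : Fin l.length) : ℕ) := by
    intro jv
    induction jv with
    | zero =>
      intro hj w hw
      have hv : n - 1 - 0 < n := by omega
      rcases occR _ (d ⟨0, hj⟩).isLt (n-1-0) hv (hdval' ⟨0, hj⟩) with h1 | h2 | h3
      · have hww : w = ⟨n-1-0, hv⟩ := Fin.ext (by simp only [Fin.val_mk]; omega)
        rw [hww]
        exact le_of_eq h1.symm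
      · obtain ⟨_, hb, _⟩ := h2
        have := Rrow_le n l ((d ⟨0, hj⟩ : Fin l.length) : ℕ)
        omega
      · obtain ⟨_, hv1, h3c⟩ := h3
        have hlt := hTDanti ⟨n-1-0-1, by omega⟩ ⟨n-1-0, hv⟩ ?_
        · have hww : w = ⟨n-1-0, hv⟩ := Fin.ext (by simp only [Fin.val_mk]; omega)
          rw [hww]
          omega
        · simp only [Fin.val_mk]
          omega
    | succ jv ih =>
      intro hj w hw
      have hv : n - 1 - (jv+1) < n := by omega
      rcases occR _ (d ⟨jv+1, hj⟩).isLt (n-1-(jv+1)) hv (hdval' ⟨jv+1, hj⟩) with h1 | h2 | h3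
      · have hww : w = ⟨n-1-(jv+1), hv⟩ := Fin.ext (by simp only [Fin.val_mk]; omega)
        rw [hww]
        exact le_of_eq h1.symm
      · exfalso
        obtain ⟨_, hb, h2c⟩ := h2
        have hih := ih (by omega) ⟨n-1-(jv+1)+1, hb⟩ (by simp only [Fin.val_mk]; omega)
        have hmono := hd (show (⟨jv, by omega⟩ : Fin n) < ⟨jv+1, hj⟩ by
          rw [Fin.lt_def]; simp only [Fin.val_mk]; omega)
        rw [Fin.lt_def] at hmono
        omega
      · obtain ⟨_, hv1, h3c⟩ := h3
        have hlt := hTDanti ⟨n-1-(jv+1)-1, by omega⟩ ⟨n-1-(jv+1), hv⟩ ?_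
        · have hww : w = ⟨n-1-(jv+1), hv⟩ := Fin.ext (by simp only [Fin.val_mk]; omega)
          rw [hww]
          omega
        · simp only [Fin.val_mk]
          omega
  have hdhigh : ∀ k jv (hj : jv < n), jv + k = n - 1 → ∀ w : Fin n, (w:ℕ) = n - 1 - jv →
      ((d ⟨jv, hj⟩ : Fin l.length) : ℕ) ≤ TD w := by
    intro k
    induction k with
    | zero =>
      intro jv hj hsum w hw
      have hv : n - 1 - jv < n := by omega
      rcases occR _ (d ⟨jv, hj⟩).isLt (n-1-jv) hv (hdval' ⟨jv, hj⟩) with h1 | h2 | h3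
      · have hww : w = ⟨n-1-jv, hv⟩ := Fin.ext (by simp only [Fin.val_mk]; omega)
        rw [hww]
        exact le_of_eq h1
      · obtain ⟨_, hb, h2c⟩ := h2
        have hlt := hTDanti ⟨n-1-jv, hv⟩ ⟨n-1-jv+1, hb⟩ (by simp only [Fin.val_mk]; omega)
        have hww : w = ⟨n-1-jv, hv⟩ := Fin.ext (by simp only [Fin.val_mk]; omega)
        rw [hww]
        omega
      · exfalso
        obtain ⟨_, hv1, h3c⟩ := h3
        omega
    | succ k ih =>
      intro jv hj hsum w hw
      have hv : n - 1 - jv < n := by omega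
      rcases occR _ (d ⟨jv, hj⟩).isLt (n-1-jv) hv (hdval' ⟨jv, hj⟩) with h1 | h2 | h3
      · have hww : w = ⟨n-1-jv, hv⟩ := Fin.ext (by simp only [Fin.val_mk]; omega)
        rw [hww]
        exact le_of_eq h1
      · obtain ⟨_, hb, h2c⟩ := h2
        have hlt := hTDanti ⟨n-1-jv, hv⟩ ⟨n-1-jv+1, hb⟩ (by simp only [Fin.val_mk]; omega)
        have hww : w = ⟨n-1-jv, hv⟩ := Fin.ext (by simp only [Fin.val_mk]; omega)
        rw [hww]
        omega
      · exfalso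
        obtain ⟨_, hv1, h3c⟩ := h3
        have hih := ih (jv+1) (by omega) (by omega) ⟨n-1-(jv+1), by omega⟩
          (by simp only [Fin.val_mk])
        have hmono := hd (show (⟨jv, hj⟩ : Fin n) < ⟨jv+1, by omega⟩ by
          rw [Fin.lt_def]; simp only [Fin.val_mk]; omega)
        rw [Fin.lt_def] at hmono
        have : (⟨n-1-jv-1, by omega⟩ : Fin n) = ⟨n-1-(jv+1), by omega⟩ := Fin.ext (by simp only [Fin.val_mk]; omega)
        rw [this] at h3c
        omega
  have hdT : ∀ j : Fin n, ∀ w : Fin n, (w:ℕ) = n - 1 - (j:ℕ) → ((d j : Fin l.length) : ℕ) = TD w := by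
    intro j w hw
    have h1 := hdlow (j:ℕ) j.isLt w hw
    have h2 := hdhigh (n - 1 - (j:ℕ)) (j:ℕ) j.isLt (by omega) w hw
    have hj : (⟨(j:ℕ), j.isLt⟩ : Fin n) = j := Fin.ext rfl
    rw [hj] at h1 h2
    omega
  have halow : ∀ jv (hj : jv < n), TU ⟨jv, hj⟩ ≤ ((a ⟨jv, hj⟩ : Fin l.length) : ℕ) := by
    intro jv
    induction jv with
    | zero =>
      intro hj
      rcases occS _ (a ⟨0, hj⟩).isLt 0 hj (haval' ⟨0, hj⟩) with h1 | h2 | h3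
      · omega
      · obtain ⟨_, hb, h2c⟩ := h2
        have hlt := hTUmono ⟨0, hj⟩ ⟨0+1, hb⟩ (by simp only [Fin.val_mk]; omega)
        omega
      · obtain ⟨_, hv1, _⟩ := h3
        omega
    | succ jv ih =>
      intro hj
      rcases occS _ (a ⟨jv+1, hj⟩).isLt (jv+1) hj (haval' ⟨jv+1, hj⟩) with h1 | h2 | h3
      · omega
      · obtain ⟨_, hb, h2c⟩ := h2
        have hlt := hTUmono ⟨jv+1, hj⟩ ⟨jv+1+1, hb⟩ (by simp only [Fin.val_mk]; omega)
        omega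
      · exfalso
        obtain ⟨_, hv1, h3c⟩ := h3
        have hih := ih (by omega)
        have hmono := ha (show (⟨jv, by omega⟩ : Fin n) < ⟨jv+1, hj⟩ by
          rw [Fin.lt_def]; simp only [Fin.val_mk]; omega)
        rw [Fin.lt_def] at hmono
        have : (⟨jv+1-1, by omega⟩ : Fin n) = ⟨jv, by omega⟩ := Fin.ext (by simp only [Fin.val_mk]; omega)
        rw [this] at h3c
        omega
  have hahigh : ∀ k jv (hj : jv < n), jv + k = n - 1 →
      ((a ⟨jv, hj⟩ : Fin l.length) : ℕ) ≤ TU ⟨jv, hj⟩ := by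
    intro k
    induction k with
    | zero =>
      intro jv hj hsum
      rcases occS _ (a ⟨jv, hj⟩).isLt jv hj (haval' ⟨jv, hj⟩) with h1 | h2 | h3
      · omega
      · obtain ⟨_, hb, h2c⟩ := h2
        omega
      · obtain ⟨_, hv1, h3c⟩ := h3
        have hlt := hTUmono ⟨jv-1, by omega⟩ ⟨jv, hj⟩ (by simp only [Fin.val_mk]; omega)
        omega
    | succ k ih =>
      intro jv hj hsum
      rcases occS _ (a ⟨jv, hj⟩).isLt jv hj (haval' ⟨jv, hj⟩) with h1 | h2 | h3
      · omega
      · exfalso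
        obtain ⟨_, hb, h2c⟩ := h2
        have hih := ih (jv+1) (by omega) (by omega)
        have hmono := ha (show (⟨jv, hj⟩ : Fin n) < ⟨jv+1, by omega⟩ by
          rw [Fin.lt_def]; simp only [Fin.val_mk]; omega)
        rw [Fin.lt_def] at hmono
        have : (⟨jv+1, hb⟩ : Fin n) = ⟨jv+1, by omega⟩ := Fin.ext rfl
        rw [this] at h2c
        omega
      · obtain ⟨_, hv1, h3c⟩ := h3
        have hlt := hTUmono ⟨jv-1, by omega⟩ ⟨jv, hj⟩ (by simp only [Fin.val_mk]; omega)
        omega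
  have haT : ∀ j : Fin n, ((a j : Fin l.length) : ℕ) = TU j := by
    intro j
    have h1 := halow (j:ℕ) j.isLt
    have h2 := hahigh (n - 1 - (j:ℕ)) (j:ℕ) j.isLt (by omega)
    have hj : (⟨(j:ℕ), j.isLt⟩ : Fin n) = j := Fin.ext rfl
    rw [hj] at h1 h2
    omega
  have hzb : (⟨0, Nat.succ_pos n⟩ : Fin (n+1)) < ⟨n, Nat.lt_succ_self n⟩ := by
    rw [Fin.lt_def]
    simp only [Fin.val_mk]
    omega
  obtain ⟨τ, hτ⟩ := Finset.card_eq_one.mp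
    (flips_once h (i := ⟨0, Nat.succ_pos n⟩) (j := ⟨n, Nat.lt_succ_self n⟩) hzb)
  have hτmem : τ ∈ (Finset.range l.length).filter
      (flipAt n l ⟨0, Nat.succ_pos n⟩ ⟨n, Nat.lt_succ_self n⟩) := by
    rw [hτ]
    exact Finset.mem_singleton_self τ
  rw [Finset.mem_filter, Finset.mem_range] at hτmem
  obtain ⟨hτN, hτflip⟩ := hτmem
  have hc : lett l τ < n := lett_lt hl hτN
  have hRS : Srow n l τ = lett l τ ∧ Rrow n l τ = lett l τ + 1 := by
    rcases hτflip with h1 | h1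
    · exact ⟨h1.1, h1.2⟩
    · exfalso
      exact Rrow_ne_lett h hτN h1.1
  have hτTD : τ = TD ⟨lett l τ, hc⟩ := by
    rcases occR τ hτN (lett l τ) hc rfl with h1 | h2 | h3
    · exact h1
    · omega
    · omega
  have hτTU : τ = TU ⟨lett l τ, hc⟩ := by
    rcases occS τ hτN (lett l τ) hc rfl with h1 | h2 | h3
    · exact h1
    · omega
    · omega
  have hcd : n - 1 - (n - 1 - lett l τ) = lett l τ := by omega
  have hidx : n - 1 - lett l τ < n := by omega
  have hxval : ((d ⟨n - 1 - lett l τ, hidx⟩ : Fin l.length) : ℕ) = τ := by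
    rw [hdT ⟨n - 1 - lett l τ, hidx⟩ ⟨lett l τ, hc⟩ (by simp only [Fin.val_mk]; omega)]
    omega
  have hyval : ((a ⟨lett l τ, hc⟩ : Fin l.length) : ℕ) = τ := by
    rw [haT ⟨lett l τ, hc⟩]
    omega
  refine ⟨d ⟨n - 1 - lett l τ, hidx⟩, ⟨⟨_, rfl⟩, ⟨⟨lett l τ, hc⟩, Fin.ext (by omega)⟩⟩, ?_⟩
  rintro y ⟨⟨i, rfl⟩, ⟨i', hi'⟩⟩
  have hlet1 : lett l ((d i : Fin l.length) : ℕ) = n - 1 - (i:ℕ) := hdval' i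
  have hlet2 : lett l ((d i : Fin l.length) : ℕ) = (i':ℕ) := by
    rw [← hi']
    exact haval' i'
  have hii' : (i':ℕ) = n - 1 - (i:ℕ) := by omega
  set q : ℕ := ((d i : Fin l.length) : ℕ) with hqd
  have hqTD : q = TD ⟨n - 1 - (i:ℕ), by omega⟩ :=
    hdT i ⟨n - 1 - (i:ℕ), by omega⟩ (by simp only [Fin.val_mk])
  have hqTU : q = TU ⟨n - 1 - (i:ℕ), by omega⟩ := by
    have h9 := haT i'
    rw [hi'] at h9
    have h10 : TU i' = TU ⟨n - 1 - (i:ℕ), by omega⟩ :=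
      congrArg TU (Fin.ext (by simp only [Fin.val_mk]; omega))
    omega
  obtain ⟨hD1, hD2, hD3, hD4, hD5⟩ := hTD ⟨n - 1 - (i:ℕ), by omega⟩
  obtain ⟨hU1, hU2, hU3, hU4, hU5⟩ := hTU ⟨n - 1 - (i:ℕ), by omega⟩
  simp only [Fin.val_mk] at hD1 hD2 hD3 hD4 hU1 hU2 hU3 hU4
  have hqflip : flipAt n l ⟨0, Nat.succ_pos n⟩ ⟨n, Nat.lt_succ_self n⟩ q := by
    left
    constructor
    · show Srow n l q = lett l q
      rw [hqTU] at hlet1 ⊢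
      rw [hU2]
      omega
    · show Rrow n l q = lett l q + 1
      rw [hqTD] at hlet1 ⊢
      rw [hD2]
      omega
  have hqmem : q ∈ (Finset.range l.length).filter
      (flipAt n l ⟨0, Nat.succ_pos n⟩ ⟨n, Nat.lt_succ_self n⟩) := by
    rw [Finset.mem_filter, Finset.mem_range]
    exact ⟨(d i).isLt, hqflip⟩
  rw [hτ, Finset.mem_singleton] at hqmem
  exact Fin.ext (by omega)
end

section
/- Let w be an element of S_{n+1}, let (i_1,...,i_ℓ) be a reduced word of w, and fix i in [n]. Then the set of positions {j in [ℓ] : i_j = i}, ordered by the word poset relation, is a chain; equivalently, for any two positions j < k with i_j = i_k = i, there is a position m with j < m < k and |i_m - i| = 1. -/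
open Equiv List

lemma swap_disjoint {α : Type*} [DecidableEq α] {a b c d : α} (h1 : a ≠ c) (h2 : a ≠ d)
    (h3 : b ≠ c) (h4 : b ≠ d) : (Equiv.swap a b).Disjoint (Equiv.swap c d) := by
  intro x
  by_cases hx : x = a ∨ x = b
  · right; rcases hx with rfl | rfl
    · exact Equiv.swap_apply_of_ne_of_ne h1 h2
    · exact Equiv.swap_apply_of_ne_of_ne h3 h4
  · push_neg at hx; left; exact Equiv.swap_apply_of_ne_of_ne hx.1 hx.2

lemma simpleT_comm (n a b : ℕ) (hab : a + 1 < b ∨ b + 1 < a) :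
    simpleT n a * simpleT n b = simpleT n b * simpleT n a := by
  unfold simpleT
  split_ifs with h1 h2 h2
  · refine Equiv.Perm.Disjoint.commute (swap_disjoint ?_ ?_ ?_ ?_) <;>
      simp [Fin.ext_iff] <;> omega
  · simp
  · simp
  · simp

lemma simpleT_sq (n c : ℕ) : simpleT n c * simpleT n c = 1 := by
  unfold simpleT
  split_ifs
  · exact Equiv.swap_mul_self _ _
  · simp

lemma commMove_isWord {n : ℕ} {w : Equiv.Perm (Fin (n+1))} {l l' : List ℕ}
    (hm : CommMove l l') (hw : IsWord n w l) : IsWord n w l' ∧ l'.length = l.length := by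
  obtain ⟨u, v, a, b, hab, rfl, rfl⟩ := hm
  obtain ⟨hmem, hprod⟩ := hw
  refine ⟨⟨?_, ?_⟩, by simp⟩
  · intro c hc
    apply hmem
    simp only [List.mem_append, List.mem_cons] at hc ⊢
    tauto
  · rw [← hprod]
    simp only [List.map_append, List.prod_append, List.map_cons, List.prod_cons]
    rw [← mul_assoc (simpleT n b), ← simpleT_comm n a b hab, mul_assoc]

lemma commEquiv_isWord {n : ℕ} {w : Equiv.Perm (Fin (n+1))} {l l' : List ℕ}
    (hm : CommEquiv l l') (hw : IsWord n w l) : IsWord n w l' ∧ l'.length = l.length := by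
  induction hm with
  | refl => exact ⟨hw, rfl⟩
  | tail _ h ih => exact ⟨(commMove_isWord h ih.1).1, (commMove_isWord h ih.1).2.trans ih.2⟩

lemma commEquiv_move (i : ℕ) : ∀ (v u t : List ℕ), (∀ c ∈ v, i + 1 < c ∨ c + 1 < i) →
    CommEquiv (u ++ i :: (v ++ t)) ((u ++ v) ++ i :: t) := by
  intro v
  induction v with
  | nil => intro u t _; simp; exact Relation.ReflTransGen.refl
  | cons c v ih =>
    intro u t hv
    refine Relation.ReflTransGen.head (b := u ++ c :: i :: (v ++ t))
      ⟨u, v ++ t, i, c, hv c (by simp), rfl, rfl⟩ ?_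
    have := ih (u ++ [c]) t (fun d hd => hv d (by simp [hd]))
    simpa [CommEquiv] using this

lemma shorten {n : ℕ} {w : Equiv.Perm (Fin (n+1))} {u t : List ℕ} {i : ℕ}
    (hw : IsWord n w (u ++ i :: i :: t)) : IsWord n w (u ++ t) := by
  obtain ⟨hmem, hprod⟩ := hw
  refine ⟨fun c hc => hmem c (by simp at hc ⊢; tauto), ?_⟩
  rw [← hprod]
  simp only [List.map_append, List.prod_append, List.map_cons, List.prod_cons]
  rw [← mul_assoc (simpleT n i), simpleT_sq, one_mul]

lemma key (n : ℕ) (w : Equiv.Perm (Fin (n+1))) (l : List ℕ) (h : IsReducedWord n w l)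
    (i : ℕ) : ∀ d (j k : Fin l.length), (k : ℕ) - j = d → j < k → l.get j = i →
    l.get k = i →
    ∃ m : Fin l.length, j < m ∧ m < k ∧ (l.get m = i + 1 ∨ l.get m + 1 = i) := by
  intro d
  induction d using Nat.strong_induction_on with
  | _ d ih =>
  intro j k hd hjk hj hk
  by_contra hcon
  push_neg at hcon
  by_cases hmid : ∃ m : Fin l.length, j < m ∧ m < k ∧ l.get m = i
  · obtain ⟨m, hjm, hmk, hm⟩ := hmid
    have hmk' : (m : ℕ) < k := hmk
    have hjm' : (j : ℕ) < m := hjm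
    obtain ⟨m', h1, h2, h3⟩ := ih ((m : ℕ) - j) (by omega) j m rfl hjm hj hm
    have := hcon m' h1 (lt_trans h2 hmk)
    tauto
  · push_neg at hmid
    set jn := (j : ℕ) with hjn
    set kn := (k : ℕ) with hkn
    have hjk' : jn < kn := hjk
    have hkl : kn < l.length := k.isLt
    set v := (l.drop (jn + 1)).take (kn - jn - 1) with hv
    have hvmem : ∀ c ∈ v, i + 1 < c ∨ c + 1 < i := by
      intro c hc
      obtain ⟨p, hp, rfl⟩ := List.mem_iff_getElem.1 hc
      have hplen : p < kn - jn - 1 := by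
        have := hp
        simp only [hv, List.length_take, List.length_drop] at this
        omega
      have hval : v[p] = l[jn + 1 + p]'(by omega) := by
        have : ((l.drop (jn + 1)).take (kn - jn - 1))[p]'(by simpa [hv] using hp) =
            l[jn + 1 + p]'(by omega) := by
          rw [List.getElem_take, List.getElem_drop]
        exact this
      set m : Fin l.length := ⟨jn + 1 + p, by omega⟩ with hm
      have hjm : j < m := by show jn < jn + 1 + p; omega
      have hmk : m < k := by show jn + 1 + p < kn; omega
      have hne := hmid m hjm hmk
      have hne2 := hcon m hjm hmk
      simp only [List.get_eq_getElem] at hne hne2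
      rw [hval]
      have : l[jn + 1 + p]'(by omega) ≠ i := hne
      have this2 : l[jn + 1 + p]'(by omega) ≠ i + 1 ∧ l[jn + 1 + p]'(by omega) + 1 ≠ i := hne2
      omega
    have hgetj : l[jn] = i := by simpa using hj
    have hgetk : l[kn] = i := by simpa using hk
    have hdrop : l.drop (jn + 1) = v ++ i :: l.drop (kn + 1) := by
      conv_lhs => rw [← List.take_append_drop (kn - jn - 1) (l.drop (jn + 1))]
      rw [List.drop_drop, (show jn + 1 + (kn - jn - 1) = kn by omega),
        List.drop_eq_getElem_cons hkl, hgetk, hv]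
    have hdecomp : l = l.take jn ++ i :: (v ++ (i :: l.drop (kn + 1))) := by
      conv_lhs => rw [← List.take_append_drop jn l]
      rw [List.drop_eq_getElem_cons (show jn < l.length by omega), hgetj, hdrop]
    have hce : CommEquiv l ((l.take jn ++ v) ++ i :: i :: l.drop (kn + 1)) := by
      conv_lhs => rw [hdecomp]
      exact commEquiv_move i v (l.take jn) (i :: l.drop (kn + 1)) hvmem
    obtain ⟨hw', hlen⟩ := commEquiv_isWord hce h.1
    have hshort : IsWord n w ((l.take jn ++ v) ++ l.drop (kn + 1)) := shorten hw'
    have hle : coxLen n w ≤ ((l.take jn ++ v) ++ l.drop (kn + 1)).length :=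
      Nat.sInf_le ⟨_, rfl, hshort⟩
    have h2 : ((l.take jn ++ v) ++ i :: i :: l.drop (kn + 1)).length =
        ((l.take jn ++ v) ++ l.drop (kn + 1)).length + 2 := by
      simp
      omega
    have := h.2
    omega

/-- In a reduced word, the positions carrying a fixed letter `i` form a chain in
the word poset; equivalently, between two occurrences of the letter `i` there is
a letter differing from `i` by exactly one. -/
theorem column_isChain (n : ℕ) (w : Equiv.Perm (Fin (n + 1))) (l : List ℕ)
    (h : IsReducedWord n w l) (i : ℕ) (hi : i < n) :
    (∀ j k : Fin l.length, l.get j = i → l.get k = i →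
      wordRel l j k ∨ wordRel l k j) ∧
    (∀ j k : Fin l.length, j < k → l.get j = i → l.get k = i →
      ∃ m : Fin l.length, j < m ∧ m < k ∧ (l.get m = i + 1 ∨ l.get m + 1 = i)) := by
  have hkey := key n w l h i
  have second : ∀ j k : Fin l.length, j < k → l.get j = i → l.get k = i →
      ∃ m : Fin l.length, j < m ∧ m < k ∧ (l.get m = i + 1 ∨ l.get m + 1 = i) :=
    fun j k hjk hj hk => hkey ((k : ℕ) - j) j k rfl hjk hj hk
  refine ⟨?_, second⟩
  intro j k hj hk
  rcases lt_trichotomy j k with hlt | rfl | hlt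
  · left
    obtain ⟨m, h1, h2, h3⟩ := second j k hlt hj hk
    exact Relation.ReflTransGen.head ⟨le_of_lt h1, by omega, by omega⟩
      (Relation.ReflTransGen.single ⟨le_of_lt h2, by omega, by omega⟩)
  · left; exact Relation.ReflTransGen.refl
  · right
    obtain ⟨m, h1, h2, h3⟩ := second k j hlt hk hj
    exact Relation.ReflTransGen.head ⟨le_of_lt h1, by omega, by omega⟩
      (Relation.ReflTransGen.single ⟨le_of_lt h2, by omega, by omega⟩)
end

section
/- Let P be a finite poset equipped with a function f : P → ℤ such that for each i, the fiber {x ∈ P : f(x) = i} is a chain in P. If I and J are ideals of P with |{x ∈ I : f(x) = i}| = |{x ∈ J : f(x) = i}| for all i, then I = J. -/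
/-- Two "lower" subsets of a chain are comparable. -/
lemma lower_subsets_of_chain_comparable {α : Type*} [PartialOrder α]
    {C S T : Set α} (hC : IsChain (· ≤ ·) C) (hS : S ⊆ C) (hT : T ⊆ C)
    (hSl : ∀ x ∈ S, ∀ y ∈ C, y ≤ x → y ∈ S)
    (hTl : ∀ x ∈ T, ∀ y ∈ C, y ≤ x → y ∈ T) : S ⊆ T ∨ T ⊆ S := by
  by_contra h
  push_neg at h
  obtain ⟨h1, h2⟩ := h
  obtain ⟨x, hxS, hxT⟩ := Set.not_subset.mp h1
  obtain ⟨y, hyT, hyS⟩ := Set.not_subset.mp h2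
  rcases eq_or_ne x y with rfl | hne
  · exact hxT hyT
  rcases hC (hS hxS) (hT hyT) hne with hle | hle
  · exact hxT (hTl y hyT x (hS hxS) hle)
  · exact hyS (hSl x hxS y (hT hyT) hle)

/-- Let `P` be a finite poset with a labeling `f : P → ℤ` whose fibers are chains.
Then an ideal of `P` is determined by the cardinalities of its intersections with
the fibers of `f`. -/
theorem ideal_eq_of_fiber_counts {α : Type*} [PartialOrder α] [Finite α]
    (f : α → ℤ) (hf : ∀ i : ℤ, IsChain (· ≤ ·) (f ⁻¹' {i}))
    (I J : Set α) (hI : IsLowerSet I) (hJ : IsLowerSet J)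
    (hcard : ∀ i : ℤ, (I ∩ f ⁻¹' {i}).ncard = (J ∩ f ⁻¹' {i}).ncard) :
    I = J := by
  have key : ∀ i : ℤ, I ∩ f ⁻¹' {i} = J ∩ f ⁻¹' {i} := by
    intro i
    have hcomp := lower_subsets_of_chain_comparable (hf i)
      (Set.inter_subset_right) (Set.inter_subset_right)
      (fun x hx y hy hle => ⟨hI hle hx.1, hy⟩)
      (fun x hx y hy hle => ⟨hJ hle hx.1, hy⟩)
    have hfinI : (J ∩ f ⁻¹' {i}).Finite := Set.toFinite _
    have hfinJ : (I ∩ f ⁻¹' {i}).Finite := Set.toFinite _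
    rcases hcomp with hsub | hsub
    · exact Set.eq_of_subset_of_ncard_le hsub (hcard i).ge hfinI
    · exact (Set.eq_of_subset_of_ncard_le hsub (hcard i).le hfinJ).symm
  ext x
  constructor
  · intro hx
    have : x ∈ I ∩ f ⁻¹' {f x} := ⟨hx, rfl⟩
    rw [key (f x)] at this
    exact this.1
  · intro hx
    have : x ∈ J ∩ f ⁻¹' {f x} := ⟨hx, rfl⟩
    rw [← key (f x)] at this
    exact this.1
end

section
/- Two reduced words i and j of an element w of S_{n+1} are equivalent under 2-moves (commutations) if and only if their word posets P_i and P_j are isomorphic as labeled posets. -/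
open Equiv List

/- basic lemmas -/

lemma wordRel_le {l : List ℕ} {j k : Fin l.length} (h : wordRel l j k) : j ≤ k := by
  induction h with
  | refl => exact le_refl _
  | tail _ h2 ih => exact le_trans ih h2.1

lemma wordRel_cons_succ {a : ℕ} {t : List ℕ} {j k : Fin t.length}
    (h : wordRel t j k) : wordRel (a :: t) j.succ k.succ := by
  induction h with
  | refl => exact Relation.ReflTransGen.refl
  | @tail c d _ h2 ih =>
    refine ih.tail ⟨?_, ?_, ?_⟩
    · exact Fin.succ_le_succ_iff.mpr h2.1
    · rw [List.get_cons_succ', List.get_cons_succ']; exact h2.2.1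
    · rw [List.get_cons_succ', List.get_cons_succ']; exact h2.2.2

lemma wordRel_cons_pred {a : ℕ} {t : List ℕ} {j k : Fin (a :: t).length}
    (h : wordRel (a :: t) j k) :
    ∀ j' k' : Fin t.length, j = j'.succ → k = k'.succ → wordRel t j' k' := by
  induction h with
  | refl =>
    intro j' k' hj hk
    have : j' = k' := Fin.succ_injective _ (hj ▸ hk)
    exact this ▸ Relation.ReflTransGen.refl
  | @tail c d h1 h2 ih =>
    intro j' k' hj hk
    have hcle : j ≤ c := wordRel_le h1
    have hc0 : (c : ℕ) ≠ 0 := by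
      have : (j : ℕ) = j'.val + 1 := by rw [hj]; rfl
      have := hcle
      omega
    have hcne : c ≠ (0 : Fin (t.length + 1)) := by
      intro hc; apply hc0; rw [hc]; rfl
    set c' := c.pred hcne with hc'
    have hcs : c = c'.succ := (Fin.succ_pred c hcne).symm
    rw [hcs, hk] at h2
    rw [List.get_cons_succ', List.get_cons_succ'] at h2
    refine (ih j' c' hj hcs).tail ⟨?_, ?_, ?_⟩
    · exact Fin.succ_le_succ_iff.mp h2.1
    · exact h2.2.1
    · exact h2.2.2

lemma wordRel_cons_iff {a : ℕ} {t : List ℕ} (j k : Fin t.length) :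
    wordRel t j k ↔ wordRel (a :: t) j.succ k.succ :=
  ⟨wordRel_cons_succ, fun h => wordRel_cons_pred h j k rfl rfl⟩

lemma commMove_symm : Symmetric CommMove := by
  rintro l l' ⟨u, v, a, b, hab, h1, h2⟩
  exact ⟨u, v, b, a, hab.symm, h2, h1⟩

lemma commEquiv_symm : Symmetric CommEquiv :=
  fun x y h => (@Relation.ReflTransGen.symmetric _ _ ⟨fun a b hab => commMove_symm hab⟩).symm x y h

lemma commEquiv_cons (a : ℕ) {t t' : List ℕ} (h : CommEquiv t t') :
    CommEquiv (a :: t) (a :: t') := by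
  refine Relation.ReflTransGen.lift (a :: ·) ?_ _ _ h
  rintro x y ⟨u, v, p, q, hpq, h1, h2⟩
  exact ⟨a :: u, v, p, q, hpq, by simp [h1], by simp [h2]⟩

lemma commEquiv_toFront : ∀ (u : List ℕ) (a : ℕ) (v : List ℕ),
    (∀ x ∈ u, x + 1 < a ∨ a + 1 < x) → CommEquiv (u ++ a :: v) (a :: (u ++ v))
  | [], a, v, _ => Relation.ReflTransGen.refl
  | c :: u, a, v, h => by
    have h1 := commEquiv_toFront u a v (fun x hx => h x (by simp [hx]))
    have h2 : CommEquiv (c :: (u ++ a :: v)) (c :: (a :: (u ++ v))) := commEquiv_cons c h1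
    refine h2.tail ?_
    exact ⟨[], u ++ v, c, a, h c (by simp), rfl, rfl⟩

/- the swap map -/

def swVal (m i : ℕ) : ℕ := if i = m then m + 1 else if i = m + 1 then m else i

lemma swVal_swVal (m i : ℕ) : swVal m (swVal m i) = i := by
  unfold swVal; split_ifs <;> omega

def swFin (u v : List ℕ) (x y x' y' : ℕ) :
    Fin (u ++ x :: y :: v).length → Fin (u ++ x' :: y' :: v).length :=
  fun j => ⟨swVal u.length j.val, by
    have := j.2
    simp only [List.length_append, List.length_cons] at this ⊢
    unfold swVal; split_ifs <;> omega⟩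

lemma get_of_getElem? {l : List ℕ} {j : Fin l.length} {x : ℕ}
    (h : l[(j : ℕ)]? = some x) : l.get j = x := by
  rw [List.get_eq_getElem]
  rw [List.getElem?_eq_getElem j.2] at h
  exact Option.some.inj h

lemma getElem?_mid0 (u v : List ℕ) (x y : ℕ) : (u ++ x :: y :: v)[u.length]? = some x := by
  rw [List.getElem?_append_right (le_refl _)]
  simp

lemma getElem?_mid1 (u v : List ℕ) (x y : ℕ) :
    (u ++ x :: y :: v)[u.length + 1]? = some y := by
  rw [List.getElem?_append_right (by omega)]
  have : u.length + 1 - u.length = 1 := by omega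
  rw [this]; simp

lemma getElem?_mid_lo (u v : List ℕ) (x y : ℕ) {i : ℕ} (hi : i < u.length) :
    (u ++ x :: y :: v)[i]? = some (u[i]'hi) := by
  rw [List.getElem?_append_left hi, List.getElem?_eq_getElem hi]

lemma getElem?_mid_hi (u v : List ℕ) (x y : ℕ) (d : ℕ) :
    (u ++ x :: y :: v)[u.length + 2 + d]? = v[d]? := by
  rw [List.getElem?_append_right (by omega)]
  have : u.length + 2 + d - u.length = d + 2 := by omega
  rw [this]; simp

lemma label_swap (u v : List ℕ) (a b : ℕ) (j : Fin (u ++ a :: b :: v).length) :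
    (u ++ b :: a :: v).get (swFin u v a b b a j) = (u ++ a :: b :: v).get j := by
  have hj := j.2
  simp only [List.length_append, List.length_cons] at hj
  have hval : ((swFin u v a b b a j : Fin _) : ℕ) = swVal u.length j.val := rfl
  rcases Nat.lt_trichotomy j.val u.length with h | h | h
  · have hs : swVal u.length j.val = j.val := by unfold swVal; split_ifs <;> omega
    refine (get_of_getElem? ?_).trans (get_of_getElem? (getElem?_mid_lo u v a b h)).symm
    rw [hval, hs, getElem?_mid_lo u v b a h]
  · rcases h with h
    have hs : swVal u.length j.val = u.length + 1 := by unfold swVal; split_ifs <;> omega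
    refine (get_of_getElem? ?_).trans (get_of_getElem? (h ▸ getElem?_mid0 u v a b)).symm
    rw [hval, hs, getElem?_mid1 u v b a]
  · rcases Nat.lt_or_ge j.val (u.length + 2) with h2 | h2
    · have hjv : j.val = u.length + 1 := by omega
      have hs : swVal u.length j.val = u.length := by unfold swVal; split_ifs <;> omega
      refine (get_of_getElem? ?_).trans (get_of_getElem? (hjv ▸ getElem?_mid1 u v a b)).symm
      rw [hval, hs, getElem?_mid0 u v b a]
    · obtain ⟨d, hd⟩ : ∃ d, j.val = u.length + 2 + d := ⟨j.val - u.length - 2, by omega⟩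
      have hs : swVal u.length j.val = j.val := by unfold swVal; split_ifs <;> omega
      have hdv : d < v.length := by omega
      have hv : v[d]? = some (v[d]'hdv) := List.getElem?_eq_getElem hdv
      refine (get_of_getElem? (x := v[d]'hdv) ?_).trans (get_of_getElem? (x := v[d]'hdv) ?_).symm
      · rw [hval, hs, hd, getElem?_mid_hi u v b a d, hv]
      · rw [hd, getElem?_mid_hi u v a b d, hv]

lemma wordRel_swap (u v : List ℕ) (a b : ℕ) (hab : a + 1 < b ∨ b + 1 < a)
    {j k : Fin (u ++ a :: b :: v).length} (h : wordRel (u ++ a :: b :: v) j k) :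
    wordRel (u ++ b :: a :: v) (swFin u v a b b a j) (swFin u v a b b a k) := by
  refine Relation.ReflTransGen.lift (swFin u v a b b a) ?_ _ _ h
  rintro x y ⟨h1, h2, h3⟩
  refine ⟨?_, ?_, ?_⟩
  · have hm : ¬(x.val = u.length ∧ y.val = u.length + 1) := by
      rintro ⟨hx, hy⟩
      have e1 : (u ++ a :: b :: v).get x = a := get_of_getElem? (by rw [hx]; exact getElem?_mid0 u v a b)
      have e2 : (u ++ a :: b :: v).get y = b := get_of_getElem? (by rw [hy]; exact getElem?_mid1 u v a b)
      rw [e1, e2] at h2 h3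
      omega
    have h1' : (x : ℕ) ≤ (y : ℕ) := h1
    show swVal u.length x.val ≤ swVal u.length y.val
    unfold swVal; split_ifs <;> omega
  · rw [label_swap, label_swap]; exact h2
  · rw [label_swap, label_swap]; exact h3

lemma commMove_iso {l l' : List ℕ} (h : CommMove l l') :
    ∃ e : Fin l.length ≃ Fin l'.length,
      (∀ j, l'.get (e j) = l.get j) ∧
      (∀ j k, wordRel l j k ↔ wordRel l' (e j) (e k)) := by
  obtain ⟨u, v, a, b, hab, rfl, rfl⟩ := h
  have hinv : ∀ j : Fin (u ++ a :: b :: v).length,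
      swFin u v b a a b (swFin u v a b b a j) = j := by
    intro j; apply Fin.ext; exact swVal_swVal u.length j.val
  have hinv' : ∀ j : Fin (u ++ b :: a :: v).length,
      swFin u v a b b a (swFin u v b a a b j) = j := by
    intro j; apply Fin.ext; exact swVal_swVal u.length j.val
  refine ⟨⟨swFin u v a b b a, swFin u v b a a b, hinv, hinv'⟩, ?_, ?_⟩
  · intro j; exact label_swap u v a b j
  · intro j k
    constructor
    · exact wordRel_swap u v a b hab
    · intro hw
      have h2 := wordRel_swap u v b a hab.symm hw
      rwa [show swFin u v b a a b ((⟨swFin u v a b b a, swFin u v b a a b, hinv, hinv'⟩ :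
          Fin (u ++ a :: b :: v).length ≃ Fin (u ++ b :: a :: v).length) j) = j from hinv j,
        show swFin u v b a a b ((⟨swFin u v a b b a, swFin u v b a a b, hinv, hinv'⟩ :
          Fin (u ++ a :: b :: v).length ≃ Fin (u ++ b :: a :: v).length) k) = k from hinv k] at h2

lemma commEquiv_iso {l l' : List ℕ} (h : CommEquiv l l') :
    ∃ e : Fin l.length ≃ Fin l'.length,
      (∀ j, l'.get (e j) = l.get j) ∧
      (∀ j k, wordRel l j k ↔ wordRel l' (e j) (e k)) := by
  induction h with
  | refl => exact ⟨Equiv.refl _, fun j => rfl, fun j k => Iff.rfl⟩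
  | tail _ h2 ih =>
    obtain ⟨e1, hl1, hr1⟩ := ih
    obtain ⟨e2, hl2, hr2⟩ := commMove_iso h2
    exact ⟨e1.trans e2, fun j => (hl2 (e1 j)).trans (hl1 j),
      fun j k => (hr1 j k).trans (hr2 (e1 j) (e1 k))⟩

lemma iso_to_commEquiv : ∀ (N : ℕ) (l l' : List ℕ), l.length ≤ N →
    (∃ e : Fin l.length ≃ Fin l'.length,
      (∀ j, l'.get (e j) = l.get j) ∧
      (∀ j k, wordRel l j k ↔ wordRel l' (e j) (e k))) → CommEquiv l l' := by
  intro N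
  induction N with
  | zero =>
    intro l l' hl ⟨e, _, _⟩
    have h0 : l = [] := List.length_eq_zero_iff.mp (Nat.le_zero.mp hl)
    subst h0
    cases l' with
    | nil => exact Relation.ReflTransGen.refl
    | cons c t' => exact absurd (e.symm ⟨0, by simp⟩).2 (by simp)
  | succ N ih =>
    intro l l' hl hiso
    obtain ⟨e, hlab, hrel⟩ := hiso
    cases l with
    | nil =>
      cases l' with
      | nil => exact Relation.ReflTransGen.refl
      | cons c t' => exact absurd (e.symm ⟨0, by simp⟩).2 (by simp)
    | cons a t =>
      set z : Fin (a :: t).length := ⟨0, by simp⟩ with hz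
      set p : Fin l'.length := e z with hp
      have hgetp : l'.get p = a := hlab z
      -- all letters before p commute with a
      have hcomm : ∀ x ∈ l'.take p.val, x + 1 < a ∨ a + 1 < x := by
        intro x hx
        rw [List.mem_iff_getElem] at hx
        obtain ⟨i, hi, hix⟩ := hx
        have hiP : i < p.val := by
          rw [List.length_take, lt_min_iff] at hi; exact hi.1
        have hival : i < l'.length := lt_trans hiP p.2
        have hxval : l'.get ⟨i, hival⟩ = x := by
          rw [List.get_eq_getElem]
          rw [List.getElem_take] at hix
          exact hix
        by_contra hcon
        push_neg at hcon
        have hstep : wordRel l' ⟨i, hival⟩ p := by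
          refine Relation.ReflTransGen.single ⟨?_, ?_, ?_⟩
          · exact le_of_lt hiP
          · rw [hxval, hgetp]; omega
          · rw [hxval, hgetp]; omega
        have := (hrel (e.symm ⟨i, hival⟩) z).mpr (by rwa [Equiv.apply_symm_apply])
        have hle := wordRel_le this
        have hz0 : (e.symm ⟨i, hival⟩ : ℕ) = 0 := by
          have : (e.symm ⟨i, hival⟩ : ℕ) ≤ (z : ℕ) := hle
          simpa [hz] using this
        have : e.symm ⟨i, hival⟩ = z := Fin.ext (by simpa [hz] using hz0)
        have heq : (⟨i, hival⟩ : Fin l'.length) = p := by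
          rw [hp, ← this, Equiv.apply_symm_apply]
        have hip : i = (p : ℕ) := by simpa using congrArg Fin.val heq
        omega
      set u := l'.take p.val with hu
      set v := l'.drop (p.val + 1) with hv
      have hsplit : l' = u ++ a :: v := by
        have h1 : l'[(p : ℕ)] = a := by rw [← hgetp, List.get_eq_getElem]
        conv_lhs => rw [← List.take_append_drop p.val l', List.drop_eq_getElem_cons p.2, h1]
      set t' := u ++ v with ht'
      have hmv : CommEquiv l' (a :: t') := by
        rw [hsplit]; exact commEquiv_toFront u a v hcomm
      obtain ⟨e2, hlab2, hrel2⟩ := commEquiv_iso hmv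
      -- composed iso from (a :: t) to (a :: t')
      set E : Fin (a :: t).length ≃ Fin (a :: t').length := e.trans e2 with hE
      have hlabE : ∀ j, (a :: t').get (E j) = (a :: t).get j :=
        fun j => (hlab2 (e j)).trans (hlab j)
      have hrelE : ∀ j k, wordRel (a :: t) j k ↔ wordRel (a :: t') (E j) (E k) :=
        fun j k => (hrel j k).trans (hrel2 (e j) (e k))
      -- E maps 0 to 0
      set z' : Fin (a :: t').length := ⟨0, by simp⟩ with hz'
      have hE0 : E z = z' := by
        have hgz : (a :: t').get z' = a := rfl
        have hgz2 : (a :: t).get z = a := rfl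
        have hstep : wordRel (a :: t') z' (E z) := by
          refine Relation.ReflTransGen.single ⟨?_, ?_, ?_⟩
          · show (z' : ℕ) ≤ ((E z : Fin (a :: t').length) : ℕ)
            exact Nat.zero_le _
          · rw [hlabE z, hgz, hgz2]; omega
          · rw [hlabE z, hgz, hgz2]; omega
        have := (hrelE (E.symm z') z).mpr (by rwa [Equiv.apply_symm_apply])
        have hle := wordRel_le this
        have : E.symm z' = z := Fin.ext (by
          have : (E.symm z' : ℕ) ≤ (z : ℕ) := hle
          simpa [hz] using this)
        rw [← this, Equiv.apply_symm_apply]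
      have hEz : ∀ j : Fin t.length, E j.succ ≠ z' := by
        intro j hcon
        have : j.succ = z := by rw [← hE0] at hcon; exact E.injective hcon
        have := congrArg Fin.val this
        simp [hz] at this
      have hEz' : ∀ j : Fin t'.length, E.symm j.succ ≠ z := by
        intro j hcon
        have : j.succ = z' := by
          rw [← hE0, ← hcon, Equiv.apply_symm_apply]
        have := congrArg Fin.val this
        simp [hz'] at this
      -- build the tail equiv
      have hzz : z = (0 : Fin (t.length + 1)) := rfl
      have hzz' : z' = (0 : Fin (t'.length + 1)) := rfl
      set F : Fin t.length ≃ Fin t'.length :=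
        { toFun := fun j => (E j.succ).pred (by rw [← hzz']; exact hEz j)
          invFun := fun j => (E.symm j.succ).pred (by rw [← hzz]; exact hEz' j)
          left_inv := by
            intro j
            simp only [Fin.succ_pred, Equiv.symm_apply_apply, Fin.pred_succ]
          right_inv := by
            intro j
            simp only [Fin.succ_pred, Equiv.apply_symm_apply, Fin.pred_succ] } with hF
      have hFsucc : ∀ j : Fin t.length, (F j).succ = E j.succ := by
        intro j
        exact Fin.succ_pred (E j.succ) (by rw [← hzz']; exact hEz j)
      have hlabF : ∀ j, t'.get (F j) = t.get j := by
        intro j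
        have := hlabE j.succ
        rw [← hFsucc j] at this
        rw [get_cons_succ', get_cons_succ'] at this
        exact this
      have hrelF : ∀ j k, wordRel t j k ↔ wordRel t' (F j) (F k) := by
        intro j k
        rw [wordRel_cons_iff (a := a) j k, wordRel_cons_iff (a := a) (F j) (F k)]
        rw [hFsucc j, hFsucc k]
        exact hrelE j.succ k.succ
      have htlen : t.length ≤ N := by
        have : (a :: t).length ≤ N + 1 := hl
        simpa using this
      have htt' : CommEquiv t t' := ih t t' htlen ⟨F, hlabF, hrelF⟩
      have h1 : CommEquiv (a :: t) (a :: t') := commEquiv_cons a htt'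
      exact h1.trans (commEquiv_symm hmv)


/-- Two reduced words of `w` are related by a sequence of 2-moves if and only if
their word posets are isomorphic as labeled posets. -/
theorem commEquiv_iff_wordPoset_iso (n : ℕ) (w : Equiv.Perm (Fin (n + 1)))
    (l l' : List ℕ) (h : IsReducedWord n w l) (h' : IsReducedWord n w l') :
    CommEquiv l l' ↔
      ∃ e : Fin l.length ≃ Fin l'.length,
        (∀ j, l'.get (e j) = l.get j) ∧
        (∀ j k, wordRel l j k ↔ wordRel l' (e j) (e k)) :=
  ⟨commEquiv_iso, iso_to_commEquiv l.length l l' (le_refl _)⟩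
end
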